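/- arXiv:2103.16395 — 3 statements merged into one kernel-verified Lean document; each statement's English description precedes it below -/
import Mathlib

section
/- Let m, n, ℓ, ε, η be positive integers and let Δ_S(λ) = Δ_a − λΔ_b be a pencil of size ((η+1)m+ℓ+εn) × ((ε+1)n+ℓ+ηm), partitioned into 3×3 blocks Δ_{ij}(λ) = Δ_{ij}^a − λΔ_{ij}^b with row block sizes (η+1)m, ℓ, εn and column block sizes (ε+1)n, ℓ, ηm. Let ΔT be the block matrix built from these blocks as in the context. Then ‖ΔT‖₂ ≤ √3 · ‖Δ_S(λ)‖₂. -/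
open Matrix
open scoped Kronecker

noncomputable section

/-- The `k × (k+1)` matrix `E_k = [I_k 0]`. -/
def Ek (𝕜 : Type*) [RCLike 𝕜] (k : ℕ) : Matrix (Fin k) (Fin (k+1)) 𝕜 :=
  Matrix.of fun i j => if (j : ℕ) = (i : ℕ) then 1 else 0

/-- The `k × (k+1)` matrix `F_k = [0 I_k]`. -/
def Fk (𝕜 : Type*) [RCLike 𝕜] (k : ℕ) : Matrix (Fin k) (Fin (k+1)) 𝕜 :=
  Matrix.of fun i j => if (j : ℕ) = (i : ℕ) + 1 then 1 else 0

/-- The standard unit vector `(0, …, 0, 1)ᵀ` of size `k+1`. -/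
def evec (𝕜 : Type*) [RCLike 𝕜] (k : ℕ) : Fin (k+1) → 𝕜 :=
  fun i => if (i : ℕ) = k then 1 else 0

variable {𝕜 : Type*} [RCLike 𝕜]

/-- Frobenius norm of a matrix. -/
def frobNorm {p q : Type*} [Fintype p] [Fintype q] (M : Matrix p q 𝕜) : ℝ :=
  Real.sqrt (∑ i, ∑ j, ‖M i j‖ ^ 2)

/-- Spectral norm (largest singular value) of a matrix. -/
def specNorm {p q : Type*} [Fintype p] [Fintype q] [DecidableEq p] (M : Matrix p q 𝕜) : ℝ :=
  Real.sqrt (⨆ i, (Matrix.isHermitian_mul_conjTranspose_self M).eigenvalues i)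

/-- Smallest singular value of a `p × q` matrix with `p ≤ q`
(the `p`-th largest singular value). -/
def sigmaMin {p q : Type*} [Fintype p] [Fintype q] [DecidableEq p] (M : Matrix p q 𝕜) : ℝ :=
  Real.sqrt (⨅ i, (Matrix.isHermitian_mul_conjTranspose_self M).eigenvalues i)

/-- Euclidean norm of a vector. -/
def vecNorm {q : Type*} [Fintype q] (x : q → 𝕜) : ℝ :=
  Real.sqrt (∑ i, ‖x i‖ ^ 2)

/-- Frobenius norm of the pencil `P.1 - λ • P.2`. -/
def pFrob {p q : Type*} [Fintype p] [Fintype q] (P : Matrix p q 𝕜 × Matrix p q 𝕜) : ℝ :=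
  Real.sqrt (frobNorm P.1 ^ 2 + frobNorm P.2 ^ 2)

/-- Spectral norm of the pencil `P.1 - λ • P.2`. -/
def pSpec {p q : Type*} [Fintype p] [Fintype q] [DecidableEq p]
    (P : Matrix p q 𝕜 × Matrix p q 𝕜) : ℝ :=
  Real.sqrt (specNorm P.1 ^ 2 + specNorm P.2 ^ 2)

/-- A 3×3 block matrix. -/
def blocks3 {R1 R2 R3 C1 C2 C3 : Type*}
    (M11 : Matrix R1 C1 𝕜) (M12 : Matrix R1 C2 𝕜) (M13 : Matrix R1 C3 𝕜)
    (M21 : Matrix R2 C1 𝕜) (M22 : Matrix R2 C2 𝕜) (M23 : Matrix R2 C3 𝕜)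
    (M31 : Matrix R3 C1 𝕜) (M32 : Matrix R3 C2 𝕜) (M33 : Matrix R3 C3 𝕜) :
    Matrix (R1 ⊕ (R2 ⊕ R3)) (C1 ⊕ (C2 ⊕ C3)) 𝕜 :=
  Matrix.fromBlocks M11 (Matrix.fromCols M12 M13) (Matrix.fromRows M21 M31)
    (Matrix.fromBlocks M22 M23 M32 M33)

/-- `K̂₂ᵀ C = (e_{η+1} ⊗ I_m) C`. -/
def colUnit {m ℓ : ℕ} (η : ℕ) (C : Matrix (Fin m) (Fin ℓ) 𝕜) :
    Matrix (Fin (η+1) × Fin m) (Fin ℓ) 𝕜 :=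
  Matrix.of fun i j => evec 𝕜 η i.1 * C i.2 j

/-- `B K̂₁ = B (e_{ε+1}ᵀ ⊗ I_n)`. -/
def rowUnit {n ℓ : ℕ} (ε : ℕ) (B : Matrix (Fin ℓ) (Fin n) 𝕜) :
    Matrix (Fin ℓ) (Fin (ε+1) × Fin n) 𝕜 :=
  Matrix.of fun i j => evec 𝕜 ε j.1 * B i j.2

/-- Row index type of a block Kronecker pencil. -/
abbrev SRow (m ℓ ε η n : ℕ) := (Fin (η+1) × Fin m) ⊕ (Fin ℓ ⊕ (Fin ε × Fin n))

/-- Column index type of a block Kronecker pencil. -/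
abbrev SCol (m ℓ ε η n : ℕ) := (Fin (ε+1) × Fin n) ⊕ (Fin ℓ ⊕ (Fin η × Fin m))

/-- The block Kronecker pencil
`S(λ) = [[M(λ), K̂₂ᵀC, K₂ᵀ(λ)], [BK̂₁, A-λI, 0], [K₁(λ), 0, 0]]`
represented as a pair `(Sa, Sb)` with `S(λ) = Sa - λ Sb`. -/
def blockKron (m n ℓ ε η : ℕ) (A : Matrix (Fin ℓ) (Fin ℓ) 𝕜) (B : Matrix (Fin ℓ) (Fin n) 𝕜)
    (C : Matrix (Fin m) (Fin ℓ) 𝕜)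
    (M : Matrix (Fin (η+1) × Fin m) (Fin (ε+1) × Fin n) 𝕜 ×
         Matrix (Fin (η+1) × Fin m) (Fin (ε+1) × Fin n) 𝕜) :
    Matrix (SRow m ℓ ε η n) (SCol m ℓ ε η n) 𝕜 × Matrix (SRow m ℓ ε η n) (SCol m ℓ ε η n) 𝕜 :=
  (blocks3 M.1 (colUnit η C) ((Ek 𝕜 η)ᵀ ⊗ₖ (1 : Matrix (Fin m) (Fin m) 𝕜))
      (rowUnit ε B) A 0
      (Ek 𝕜 ε ⊗ₖ (1 : Matrix (Fin n) (Fin n) 𝕜)) 0 0,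
   blocks3 M.2 0 ((Fk 𝕜 η)ᵀ ⊗ₖ (1 : Matrix (Fin m) (Fin m) 𝕜))
      0 1 0
      (Fk 𝕜 ε ⊗ₖ (1 : Matrix (Fin n) (Fin n) 𝕜)) 0 0)

/-- Row index type of the matrix `T`. -/
abbrev TRow (m ℓ ε η n : ℕ) :=
  (((Fin η × Fin m) × Fin ℓ) ⊕ ((Fin η × Fin m) × Fin ℓ)) ⊕
  (((Fin ℓ × (Fin ε × Fin n)) ⊕ (Fin ℓ × (Fin ε × Fin n))) ⊕
   (((Fin η × Fin m) × (Fin ε × Fin n)) ⊕ ((Fin η × Fin m) × (Fin ε × Fin n))))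

/-- Column index type of the matrix `T`. -/
abbrev TCol (m ℓ ε η n : ℕ) :=
  (((Fin (η+1) × Fin m) × Fin ℓ) ⊕ ((Fin η × Fin m) × Fin ℓ)) ⊕
  (((Fin ℓ × (Fin ε × Fin n)) ⊕ (Fin ℓ × (Fin (ε+1) × Fin n))) ⊕
   (((Fin (η+1) × Fin m) × (Fin ε × Fin n)) ⊕ ((Fin η × Fin m) × (Fin (ε+1) × Fin n))))

/-- The 6×6 block matrix `T`. -/
def Tmat (m n ℓ ε η : ℕ) (A : Matrix (Fin ℓ) (Fin ℓ) 𝕜) (B : Matrix (Fin ℓ) (Fin n) 𝕜)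
    (C : Matrix (Fin m) (Fin ℓ) 𝕜) : Matrix (TRow m ℓ ε η n) (TCol m ℓ ε η n) 𝕜 :=
  Matrix.fromRows
    (Matrix.fromCols
      (Matrix.fromBlocks
        ((Ek 𝕜 η ⊗ₖ (1 : Matrix (Fin m) (Fin m) 𝕜)) ⊗ₖ (1 : Matrix (Fin ℓ) (Fin ℓ) 𝕜))
        ((1 : Matrix (Fin η × Fin m) (Fin η × Fin m) 𝕜) ⊗ₖ A)
        ((Fk 𝕜 η ⊗ₖ (1 : Matrix (Fin m) (Fin m) 𝕜)) ⊗ₖ (1 : Matrix (Fin ℓ) (Fin ℓ) 𝕜))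
        ((1 : Matrix (Fin η × Fin m) (Fin η × Fin m) 𝕜) ⊗ₖ (1 : Matrix (Fin ℓ) (Fin ℓ) 𝕜)))
      (Matrix.fromCols 0
        (Matrix.fromBlocks 0
          ((1 : Matrix (Fin η × Fin m) (Fin η × Fin m) 𝕜) ⊗ₖ (rowUnit ε B))
          0 0)))
    (Matrix.fromRows
      (Matrix.fromCols 0
        (Matrix.fromCols
          (Matrix.fromBlocks
            (Aᵀ ⊗ₖ (1 : Matrix (Fin ε × Fin n) (Fin ε × Fin n) 𝕜))
            ((1 : Matrix (Fin ℓ) (Fin ℓ) 𝕜) ⊗ₖ (Ek 𝕜 ε ⊗ₖ (1 : Matrix (Fin n) (Fin n) 𝕜)))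
            ((1 : Matrix (Fin ℓ) (Fin ℓ) 𝕜) ⊗ₖ (1 : Matrix (Fin ε × Fin n) (Fin ε × Fin n) 𝕜))
            ((1 : Matrix (Fin ℓ) (Fin ℓ) 𝕜) ⊗ₖ (Fk 𝕜 ε ⊗ₖ (1 : Matrix (Fin n) (Fin n) 𝕜))))
          (Matrix.fromBlocks
            (Matrix.of fun (i : Fin ℓ × (Fin ε × Fin n))
                (j : (Fin (η+1) × Fin m) × (Fin ε × Fin n)) =>
              evec 𝕜 η j.1.1 * C j.1.2 i.1 * (if i.2 = j.2 then 1 else 0))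
            0 0 0)))
      (Matrix.fromCols 0
        (Matrix.fromCols 0
          (Matrix.fromBlocks
            ((Ek 𝕜 η ⊗ₖ (1 : Matrix (Fin m) (Fin m) 𝕜)) ⊗ₖ
              (1 : Matrix (Fin ε × Fin n) (Fin ε × Fin n) 𝕜))
            ((1 : Matrix (Fin η × Fin m) (Fin η × Fin m) 𝕜) ⊗ₖ
              (Ek 𝕜 ε ⊗ₖ (1 : Matrix (Fin n) (Fin n) 𝕜)))
            ((Fk 𝕜 η ⊗ₖ (1 : Matrix (Fin m) (Fin m) 𝕜)) ⊗ₖ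
              (1 : Matrix (Fin ε × Fin n) (Fin ε × Fin n) 𝕜))
            ((1 : Matrix (Fin η × Fin m) (Fin η × Fin m) 𝕜) ⊗ₖ
              (Fk 𝕜 ε ⊗ₖ (1 : Matrix (Fin n) (Fin n) 𝕜)))))))

/-- The 6×6 block matrix `ΔT` built from the blocks of the perturbation pencil. -/
def DeltaT (m n ℓ ε η : ℕ)
    (Δ12a Δ12b : Matrix (Fin (η+1) × Fin m) (Fin ℓ) 𝕜)
    (Δ13a Δ13b : Matrix (Fin (η+1) × Fin m) (Fin η × Fin m) 𝕜)
    (Δ21a Δ21b : Matrix (Fin ℓ) (Fin (ε+1) × Fin n) 𝕜)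
    (Δ22a Δ22b : Matrix (Fin ℓ) (Fin ℓ) 𝕜)
    (Δ23a Δ23b : Matrix (Fin ℓ) (Fin η × Fin m) 𝕜)
    (Δ31a Δ31b : Matrix (Fin ε × Fin n) (Fin (ε+1) × Fin n) 𝕜)
    (Δ32a Δ32b : Matrix (Fin ε × Fin n) (Fin ℓ) 𝕜) :
    Matrix (TRow m ℓ ε η n) (TCol m ℓ ε η n) 𝕜 :=
  Matrix.fromRows
    (Matrix.fromCols
      (Matrix.fromBlocks
        (Δ13aᵀ ⊗ₖ (1 : Matrix (Fin ℓ) (Fin ℓ) 𝕜))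
        ((1 : Matrix (Fin η × Fin m) (Fin η × Fin m) 𝕜) ⊗ₖ Δ22a)
        (Δ13bᵀ ⊗ₖ (1 : Matrix (Fin ℓ) (Fin ℓ) 𝕜))
        ((1 : Matrix (Fin η × Fin m) (Fin η × Fin m) 𝕜) ⊗ₖ Δ22b))
      (Matrix.fromCols 0
        (Matrix.fromBlocks 0 ((1 : Matrix (Fin η × Fin m) (Fin η × Fin m) 𝕜) ⊗ₖ Δ21a)
          0 ((1 : Matrix (Fin η × Fin m) (Fin η × Fin m) 𝕜) ⊗ₖ Δ21b))))
    (Matrix.fromRows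
      (Matrix.fromCols 0
        (Matrix.fromCols
          (Matrix.fromBlocks
            (Δ22aᵀ ⊗ₖ (1 : Matrix (Fin ε × Fin n) (Fin ε × Fin n) 𝕜))
            ((1 : Matrix (Fin ℓ) (Fin ℓ) 𝕜) ⊗ₖ Δ31a)
            (Δ22bᵀ ⊗ₖ (1 : Matrix (Fin ε × Fin n) (Fin ε × Fin n) 𝕜))
            ((1 : Matrix (Fin ℓ) (Fin ℓ) 𝕜) ⊗ₖ Δ31b))
          (Matrix.fromBlocks
            (Δ12aᵀ ⊗ₖ (1 : Matrix (Fin ε × Fin n) (Fin ε × Fin n) 𝕜)) 0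
            (Δ12bᵀ ⊗ₖ (1 : Matrix (Fin ε × Fin n) (Fin ε × Fin n) 𝕜)) 0)))
      (Matrix.fromCols
        (Matrix.fromBlocks 0 ((1 : Matrix (Fin η × Fin m) (Fin η × Fin m) 𝕜) ⊗ₖ Δ32a)
          0 ((1 : Matrix (Fin η × Fin m) (Fin η × Fin m) 𝕜) ⊗ₖ Δ32b))
        (Matrix.fromCols
          (Matrix.fromBlocks
            (Δ23aᵀ ⊗ₖ (1 : Matrix (Fin ε × Fin n) (Fin ε × Fin n) 𝕜)) 0
            (Δ23bᵀ ⊗ₖ (1 : Matrix (Fin ε × Fin n) (Fin ε × Fin n) 𝕜)) 0)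
          (Matrix.fromBlocks
            (Δ13aᵀ ⊗ₖ (1 : Matrix (Fin ε × Fin n) (Fin ε × Fin n) 𝕜))
            ((1 : Matrix (Fin η × Fin m) (Fin η × Fin m) 𝕜) ⊗ₖ Δ31a)
            (Δ13bᵀ ⊗ₖ (1 : Matrix (Fin ε × Fin n) (Fin ε × Fin n) 𝕜))
            ((1 : Matrix (Fin η × Fin m) (Fin η × Fin m) 𝕜) ⊗ₖ Δ31b)))))

/-- `(Λ_k(x) ⊗ I_m)` where `Λ_k(x) = (x^k, …, x, 1)ᵀ`. -/
def LamI (𝕜 : Type*) [RCLike 𝕜] (k m : ℕ) (x : 𝕜) :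
    Matrix (Fin (k+1) × Fin m) (Fin m) 𝕜 :=
  Matrix.of fun i j => if i.2 = j then x ^ (k - (i.1 : ℕ)) else 0

/-- `(A, B)` is controllable if the controllability matrix `[B, AB, …, A^{ℓ-1}B]`
has full rank `ℓ`. -/
def Controllable {ℓ n : ℕ} (A : Matrix (Fin ℓ) (Fin ℓ) 𝕜)
    (B : Matrix (Fin ℓ) (Fin n) 𝕜) : Prop :=
  (Matrix.of fun (i : Fin ℓ) (p : Fin ℓ × Fin n) => (A ^ (p.1 : ℕ) * B) i p.2).rank = ℓ

/-- `(A, C)` is observable if `(Aᵀ, Cᵀ)` is controllable. -/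
def Observable {ℓ m : ℕ} (A : Matrix (Fin ℓ) (Fin ℓ) 𝕜)
    (C : Matrix (Fin m) (Fin ℓ) 𝕜) : Prop :=
  Controllable Aᵀ Cᵀ

end


open scoped Kronecker

noncomputable section
variable {𝕜 : Type*} [RCLike 𝕜]

namespace S6

def sqn {ι : Type*} [Fintype ι] (x : ι → 𝕜) : ℝ := ∑ i, ‖x i‖ ^ 2

lemma sqn_nonneg {ι : Type*} [Fintype ι] (x : ι → 𝕜) : 0 ≤ sqn x :=
  Finset.sum_nonneg fun _ _ => sq_nonneg _

lemma re_star_dotProduct_self {ι : Type*} [Fintype ι] (x : ι → 𝕜) :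
    RCLike.re (star x ⬝ᵥ x) = sqn x := by
  have h : ∀ i, star (x i) * x i = ((‖x i‖ ^ 2 : ℝ) : 𝕜) := fun i => by
    rw [RCLike.star_def, RCLike.conj_mul]; norm_cast
  simp only [dotProduct, Pi.star_apply, h, map_sum, sqn, RCLike.ofReal_re]

lemma supEig_nonneg {p q : Type*} [Fintype p] [Fintype q] [DecidableEq p] [Nonempty p]
    (M : Matrix p q 𝕜) :
    0 ≤ ⨆ i, (Matrix.isHermitian_mul_conjTranspose_self M).eigenvalues i := by
  obtain ⟨i⟩ := ‹Nonempty p›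
  refine le_trans (Matrix.eigenvalues_self_mul_conjTranspose_nonneg M i) ?_
  exact le_ciSup (Set.Finite.bddAbove (Set.finite_range _)) i

lemma eig_le_supEig {p q : Type*} [Fintype p] [Fintype q] [DecidableEq p]
    (M : Matrix p q 𝕜) (i : p) :
    (Matrix.isHermitian_mul_conjTranspose_self M).eigenvalues i ≤
      ⨆ j, (Matrix.isHermitian_mul_conjTranspose_self M).eigenvalues j :=
  le_ciSup (Set.Finite.bddAbove (Set.finite_range _)) i

lemma sq_specNorm {p q : Type*} [Fintype p] [Fintype q] [DecidableEq p] [Nonempty p]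
    (M : Matrix p q 𝕜) :
    specNorm M ^ 2 = ⨆ i, (Matrix.isHermitian_mul_conjTranspose_self M).eigenvalues i :=
  Real.sq_sqrt (supEig_nonneg M)

lemma sqn_conjTranspose_mulVec {p q : Type*} [Fintype p] [Fintype q]
    (M : Matrix p q 𝕜) (x : p → 𝕜) :
    sqn (Mᴴ *ᵥ x) = RCLike.re (star x ⬝ᵥ ((M * Mᴴ) *ᵥ x)) := by
  have h : star x ᵥ* M = star (Mᴴ *ᵥ x) := by
    rw [Matrix.star_mulVec, Matrix.conjTranspose_conjTranspose]
  rw [← Matrix.mulVec_mulVec, Matrix.dotProduct_mulVec, h, re_star_dotProduct_self]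


lemma quad_le {p : Type*} [Fintype p] [DecidableEq p] (H : Matrix p p 𝕜)
    (hH : H.IsHermitian) (c : ℝ) (hc : ∀ i, hH.eigenvalues i ≤ c)
    (x : p → 𝕜) :
    RCLike.re (star x ⬝ᵥ (H *ᵥ x)) ≤ c * sqn x := by
  have hUU : (hH.eigenvectorUnitary : Matrix p p 𝕜) *
      star (hH.eigenvectorUnitary : Matrix p p 𝕜) = 1 :=
    (Matrix.mem_unitaryGroup_iff).mp hH.eigenvectorUnitary.2
  set U : Matrix p p 𝕜 := (hH.eigenvectorUnitary : Matrix p p 𝕜) with hU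
  set z : p → 𝕜 := (star U) *ᵥ x with hz
  have hxU : star z = star x ᵥ* U := by
    rw [hz, Matrix.star_mulVec, Matrix.star_eq_conjTranspose,
      Matrix.conjTranspose_conjTranspose]
  have key : star x ⬝ᵥ (H *ᵥ x)
      = star z ⬝ᵥ ((Matrix.diagonal (RCLike.ofReal ∘ hH.eigenvalues)) *ᵥ z) := by
    conv_lhs => rw [hH.spectral_theorem, Unitary.conjStarAlgAut_apply]
    rw [← Matrix.mulVec_mulVec, ← Matrix.mulVec_mulVec, Matrix.dotProduct_mulVec,
      ← hxU, ← hz]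
  have hzx : sqn z = sqn x := by
    rw [← re_star_dotProduct_self, ← re_star_dotProduct_self]
    congr 1
    rw [hxU, hz, Matrix.dotProduct_mulVec, Matrix.vecMul_vecMul, hUU,
      Matrix.vecMul_one]
  rw [key]
  have hterm : ∀ i, star (z i) * z i = ((‖z i‖ ^ 2 : ℝ) : 𝕜) := fun i => by
    rw [RCLike.star_def, RCLike.conj_mul]; norm_cast
  have hform : RCLike.re (star z ⬝ᵥ (Matrix.diagonal (RCLike.ofReal ∘ hH.eigenvalues) *ᵥ z))
      = ∑ i, hH.eigenvalues i * ‖z i‖ ^ 2 := by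
    simp only [dotProduct, Matrix.mulVec_diagonal, Function.comp_apply, Pi.star_apply, map_sum]
    refine Finset.sum_congr rfl fun i _ => ?_
    rw [mul_left_comm, hterm i, ← RCLike.ofReal_mul, RCLike.ofReal_re]
  rw [hform]
  calc ∑ i, hH.eigenvalues i * ‖z i‖ ^ 2
      ≤ ∑ i, c * ‖z i‖ ^ 2 :=
        Finset.sum_le_sum fun i _ => mul_le_mul_of_nonneg_right (hc i) (sq_nonneg _)
    _ = c * sqn z := by rw [sqn, Finset.mul_sum]
    _ = c * sqn x := by rw [hzx]

/-- Adjoint-direction operator bound. -/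
lemma sqn_conjTranspose_mulVec_le {p q : Type*} [Fintype p] [Fintype q] [DecidableEq p]
    [Nonempty p] (M : Matrix p q 𝕜) (x : p → 𝕜) :
    sqn (Mᴴ *ᵥ x) ≤ specNorm M ^ 2 * sqn x := by
  rw [sqn_conjTranspose_mulVec, sq_specNorm]
  exact quad_le _ _ _ (eig_le_supEig M) x

lemma specNorm_le_sqrt_of_forall {p q : Type*} [Fintype p] [Fintype q] [DecidableEq p]
    [Nonempty p] (M : Matrix p q 𝕜) (c : ℝ)
    (h : ∀ x : p → 𝕜, sqn (Mᴴ *ᵥ x) ≤ c * sqn x) :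
    specNorm M ≤ Real.sqrt c := by
  apply Real.sqrt_le_sqrt
  apply ciSup_le
  intro i
  set hH := Matrix.isHermitian_mul_conjTranspose_self M with hHdef
  have h1 : hH.eigenvalues i = sqn (Mᴴ *ᵥ ⇑(hH.eigenvectorBasis i)) := by
    rw [sqn_conjTranspose_mulVec]; exact hH.eigenvalues_eq i
  have h2 : sqn (⇑(hH.eigenvectorBasis i) : p → 𝕜) = 1 := by
    have hn : ‖hH.eigenvectorBasis i‖ = 1 := hH.eigenvectorBasis.orthonormal.1 i
    have he : sqn (⇑(hH.eigenvectorBasis i) : p → 𝕜) = ‖hH.eigenvectorBasis i‖ ^ 2 := by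
      rw [EuclideanSpace.norm_eq, Real.sq_sqrt (Finset.sum_nonneg fun _ _ => sq_nonneg _)]
      rfl
    rw [he, hn, one_pow]
  calc hH.eigenvalues i = sqn (Mᴴ *ᵥ ⇑(hH.eigenvectorBasis i)) := h1
    _ ≤ c * sqn (⇑(hH.eigenvectorBasis i) : p → 𝕜) := h _
    _ = c := by rw [h2, mul_one]

lemma specNorm_conjTranspose_le {p q : Type*} [Fintype p] [Fintype q] [DecidableEq p]
    [DecidableEq q] [Nonempty p] [Nonempty q] (M : Matrix p q 𝕜) :
    specNorm Mᴴ ≤ specNorm M := by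
  apply Real.sqrt_le_sqrt
  apply ciSup_le
  intro i
  set hH' := Matrix.isHermitian_mul_conjTranspose_self Mᴴ with hH'def
  set v : q → 𝕜 := ⇑(hH'.eigenvectorBasis i) with hv
  set lam := hH'.eigenvalues i with hlam
  have hlam0 : 0 ≤ lam := Matrix.eigenvalues_self_mul_conjTranspose_nonneg Mᴴ i
  have heig : (Mᴴ * Mᴴᴴ) *ᵥ v = lam • v := hH'.mulVec_eigenvectorBasis i
  have hlameq : lam = sqn (M *ᵥ v) := by
    have h0 := hH'.eigenvalues_eq i
    rw [← hv] at h0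
    have hstep := sqn_conjTranspose_mulVec Mᴴ v
    rw [hlam, h0, ← hstep, Matrix.conjTranspose_conjTranspose]
  rcases eq_or_lt_of_le hlam0 with h0 | hpos
  · rw [← h0]; exact supEig_nonneg M
  · have hw : (M * Mᴴ) *ᵥ (M *ᵥ v) = lam • (M *ᵥ v) := by
      rw [Matrix.mulVec_mulVec,
        show M * Mᴴ * M = M * (Mᴴ * Mᴴᴴ) by
          rw [Matrix.conjTranspose_conjTranspose, Matrix.mul_assoc],
        ← Matrix.mulVec_mulVec, heig, Matrix.mulVec_smul]
    have hq : sqn (Mᴴ *ᵥ (M *ᵥ v)) = lam * lam := by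
      rw [sqn_conjTranspose_mulVec, hw, dotProduct_smul, RCLike.smul_re,
        re_star_dotProduct_self, ← hlameq]
    have hb := sqn_conjTranspose_mulVec_le M (M *ᵥ v)
    rw [hq, ← hlameq, sq_specNorm] at hb
    exact le_of_mul_le_mul_right hb hpos

lemma sqn_mulVec_le {p q : Type*} [Fintype p] [Fintype q] [DecidableEq p]
    [DecidableEq q] [Nonempty p] [Nonempty q] (M : Matrix p q 𝕜) (x : q → 𝕜) :
    sqn (M *ᵥ x) ≤ specNorm M ^ 2 * sqn x := by
  have h := sqn_conjTranspose_mulVec_le Mᴴ x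
  rw [Matrix.conjTranspose_conjTranspose] at h
  refine h.trans ?_
  have h1 := specNorm_conjTranspose_le M
  have h2 : 0 ≤ specNorm (Mᴴ) := Real.sqrt_nonneg _
  exact mul_le_mul_of_nonneg_right (pow_le_pow_left₀ h2 h1 2) (sqn_nonneg x)

lemma sqn_eq_norm_sq {ι : Type*} [Fintype ι] (u : ι → 𝕜) :
    sqn u = ‖(WithLp.equiv 2 (ι → 𝕜)).symm u‖ ^ 2 := by
  rw [EuclideanSpace.norm_eq, Real.sq_sqrt (Finset.sum_nonneg fun _ _ => sq_nonneg _)]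
  rfl

lemma sqn_add_le {ι : Type*} [Fintype ι] (u v : ι → 𝕜) :
    sqn (u + v) ≤ (Real.sqrt (sqn u) + Real.sqrt (sqn v)) ^ 2 := by
  have h1 : Real.sqrt (sqn (u + v)) ≤ Real.sqrt (sqn u) + Real.sqrt (sqn v) := by
    rw [sqn_eq_norm_sq, sqn_eq_norm_sq, sqn_eq_norm_sq, Real.sqrt_sq (norm_nonneg _),
      Real.sqrt_sq (norm_nonneg _), Real.sqrt_sq (norm_nonneg _)]
    exact norm_add_le _ _
  calc sqn (u + v) = Real.sqrt (sqn (u + v)) ^ 2 := (Real.sq_sqrt (sqn_nonneg _)).symm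
    _ ≤ _ := pow_le_pow_left₀ (Real.sqrt_nonneg _) h1 2

lemma star_ite (p : Prop) [Decidable p] (a b : 𝕜) :
    star (if p then a else b) = if p then star a else star b := by
  split <;> rfl

lemma sum_comp_le {ι R : Type*} [Fintype ι] [Fintype R] (h : R → ℝ)
    (hh : ∀ r, 0 ≤ h r) (f : ι → R) (hf : Function.Injective f) :
    ∑ i, h (f i) ≤ ∑ r, h r := by
  classical
  rw [← Finset.sum_image (f := h) (g := f) (s := Finset.univ)
    (fun a _ b _ hab => hf hab)]
  exact Finset.sum_le_sum_of_subset_of_nonneg (Finset.subset_univ _) fun r _ _ => hh r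

lemma combo_bound {R C ι : Type*} [Fintype R] [Fintype C] [Fintype ι]
    (A B : Matrix R C 𝕜) (ca cb : ℝ) (hca : 0 ≤ ca) (hcb : 0 ≤ cb)
    (hA : ∀ w, sqn (A *ᵥ w) ≤ ca * sqn w) (hB : ∀ w, sqn (B *ᵥ w) ≤ cb * sqn w)
    (wa wb : C → 𝕜) (f : ι → R) (hf : Function.Injective f) (g : ι → 𝕜)
    (hg : ∀ i, g i = (A *ᵥ wa) (f i) + (B *ᵥ wb) (f i)) :
    sqn g ≤ (ca + cb) * (sqn wa + sqn wb) := by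
  have h1 : sqn g ≤ sqn (A *ᵥ wa + B *ᵥ wb) := by
    calc sqn g = ∑ i, ‖(A *ᵥ wa + B *ᵥ wb) (f i)‖ ^ 2 := by
          rw [sqn]; exact Finset.sum_congr rfl fun i _ => by rw [hg i, Pi.add_apply]
      _ ≤ ∑ r, ‖(A *ᵥ wa + B *ᵥ wb) r‖ ^ 2 :=
          sum_comp_le (fun r => ‖(A *ᵥ wa + B *ᵥ wb) r‖ ^ 2) (fun _ => sq_nonneg _) f hf
      _ = sqn (A *ᵥ wa + B *ᵥ wb) := by rw [sqn]
  have h2 := sqn_add_le (A *ᵥ wa) (B *ᵥ wb)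
  have h5 : Real.sqrt (sqn (A *ᵥ wa)) ≤ Real.sqrt ca * Real.sqrt (sqn wa) := by
    rw [← Real.sqrt_mul hca]; exact Real.sqrt_le_sqrt (hA wa)
  have h6 : Real.sqrt (sqn (B *ᵥ wb)) ≤ Real.sqrt cb * Real.sqrt (sqn wb) := by
    rw [← Real.sqrt_mul hcb]; exact Real.sqrt_le_sqrt (hB wb)
  have h7 : (Real.sqrt (sqn (A *ᵥ wa)) + Real.sqrt (sqn (B *ᵥ wb))) ^ 2
      ≤ (Real.sqrt ca * Real.sqrt (sqn wa) + Real.sqrt cb * Real.sqrt (sqn wb)) ^ 2 := by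
    apply pow_le_pow_left₀ (by positivity)
    · exact add_le_add h5 h6
  have key : (Real.sqrt ca * Real.sqrt (sqn wa) + Real.sqrt cb * Real.sqrt (sqn wb)) ^ 2
      ≤ (ca + cb) * (sqn wa + sqn wb) := by
    nlinarith [sq_nonneg (Real.sqrt ca * Real.sqrt (sqn wb)
        - Real.sqrt cb * Real.sqrt (sqn wa)),
      Real.sq_sqrt hca, Real.sq_sqrt hcb, Real.sq_sqrt (sqn_nonneg wa),
      Real.sq_sqrt (sqn_nonneg wb), Real.sqrt_nonneg ca, Real.sqrt_nonneg cb,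
      Real.sqrt_nonneg (sqn wa), Real.sqrt_nonneg (sqn wb)]
  linarith


set_option maxHeartbeats 1000000 in
lemma group1 {m n ℓ ε η : ℕ}
    (Δ11a Δ11b : Matrix (Fin (η+1) × Fin m) (Fin (ε+1) × Fin n) 𝕜)
    (Δ12a Δ12b : Matrix (Fin (η+1) × Fin m) (Fin ℓ) 𝕜)
    (Δ13a Δ13b : Matrix (Fin (η+1) × Fin m) (Fin η × Fin m) 𝕜)
    (Δ21a Δ21b : Matrix (Fin ℓ) (Fin (ε+1) × Fin n) 𝕜)
    (Δ22a Δ22b : Matrix (Fin ℓ) (Fin ℓ) 𝕜)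
    (Δ23a Δ23b : Matrix (Fin ℓ) (Fin η × Fin m) 𝕜)
    (Δ31a Δ31b : Matrix (Fin ε × Fin n) (Fin (ε+1) × Fin n) 𝕜)
    (Δ32a Δ32b : Matrix (Fin ε × Fin n) (Fin ℓ) 𝕜)
    (Δ33a Δ33b : Matrix (Fin ε × Fin n) (Fin η × Fin m) 𝕜)
    (ca cb : ℝ) (hca : 0 ≤ ca) (hcb : 0 ≤ cb)
    (hSaF : ∀ w, sqn (blocks3 Δ11a Δ12a Δ13a Δ21a Δ22a Δ23a Δ31a Δ32a Δ33a *ᵥ w) ≤ ca * sqn w)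
    (hSbF : ∀ w, sqn (blocks3 Δ11b Δ12b Δ13b Δ21b Δ22b Δ23b Δ31b Δ32b Δ33b *ᵥ w) ≤ cb * sqn w)
    (y : TRow m ℓ ε η n → 𝕜) (c : Fin ℓ) :
    (∑ j : Fin (η+1) × Fin m, ‖((DeltaT m n ℓ ε η Δ12a Δ12b Δ13a Δ13b Δ21a Δ21b Δ22a Δ22b Δ23a Δ23b Δ31a Δ31b Δ32a Δ32b)ᴴ *ᵥ y) (.inl (.inl (j, c)))‖ ^ 2)
      ≤ (ca + cb) * ((∑ r : Fin η × Fin m, ‖y (.inl (.inl (r, c)))‖ ^ 2)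
          + (∑ r : Fin η × Fin m, ‖y (.inl (.inr (r, c)))‖ ^ 2)) := by
  have hco := combo_bound (blocks3 Δ11a Δ12a Δ13a Δ21a Δ22a Δ23a Δ31a Δ32a Δ33a) (blocks3 Δ11b Δ12b Δ13b Δ21b Δ22b Δ23b Δ31b Δ32b Δ33b) ca cb hca hcb hSaF hSbF
    (Sum.elim (fun _ : Fin (ε+1) × Fin n => (0:𝕜)) (Sum.elim (fun _ : Fin ℓ => (0:𝕜))
      (fun r => star (y (.inl (.inl (r, c)))))))
    (Sum.elim (fun _ : Fin (ε+1) × Fin n => (0:𝕜)) (Sum.elim (fun _ : Fin ℓ => (0:𝕜))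
      (fun r => star (y (.inl (.inr (r, c)))))))
    Sum.inl Sum.inl_injective
    (fun j => star (((DeltaT m n ℓ ε η Δ12a Δ12b Δ13a Δ13b Δ21a Δ21b Δ22a Δ22b Δ23a Δ23b Δ31a Δ31b Δ32a Δ32b)ᴴ *ᵥ y) (.inl (.inl (j, c)))))
    (by
      intro j
      simp only [DeltaT, blocks3, Matrix.mulVec, dotProduct,
            Matrix.conjTranspose_apply, Fintype.sum_sum_type, Fintype.sum_prod_type,
            Matrix.fromRows_apply_inl, Matrix.fromRows_apply_inr, Matrix.fromCols_apply_inl,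
            Matrix.fromCols_apply_inr, Matrix.fromBlocks_apply₁₁, Matrix.fromBlocks_apply₁₂,
            Matrix.fromBlocks_apply₂₁, Matrix.fromBlocks_apply₂₂, Matrix.of_apply,
            Sum.elim_inl, Sum.elim_inr, Sum.map_inl, Sum.map_inr, id_eq,
            Matrix.kroneckerMap_apply, Matrix.one_apply,
            Matrix.transpose_apply, Matrix.zero_apply, Matrix.submatrix_apply,
            star_sum, star_add, S6.star_ite, star_mul', star_star, star_zero, star_one,
            mul_ite, ite_mul, mul_one, one_mul, mul_zero, zero_mul,
            Prod.mk.injEq, ite_and, Finset.sum_ite_irrel,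
            Finset.sum_ite_eq, Finset.sum_ite_eq', Finset.mem_univ, if_true,
            Finset.sum_const_zero, add_zero, zero_add,
            Pi.star_apply] <;>
          ring)
  have e0 : sqn (fun j : Fin (η+1) × Fin m => star (((DeltaT m n ℓ ε η Δ12a Δ12b Δ13a Δ13b Δ21a Δ21b Δ22a Δ22b Δ23a Δ23b Δ31a Δ31b Δ32a Δ32b)ᴴ *ᵥ y) (.inl (.inl (j, c)))))
      = ∑ j : Fin (η+1) × Fin m, ‖((DeltaT m n ℓ ε η Δ12a Δ12b Δ13a Δ13b Δ21a Δ21b Δ22a Δ22b Δ23a Δ23b Δ31a Δ31b Δ32a Δ32b)ᴴ *ᵥ y) (.inl (.inl (j, c)))‖ ^ 2 := by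
    simp [sqn]
  have ea : sqn (Sum.elim (fun _ : Fin (ε+1) × Fin n => (0:𝕜)) (Sum.elim (fun _ : Fin ℓ => (0:𝕜))
        (fun r => star (y (.inl (.inl (r, c)))))))
      = ∑ r : Fin η × Fin m, ‖y (.inl (.inl (r, c)))‖ ^ 2 := by
    simp [sqn, Fintype.sum_sum_type]
  have eb : sqn (Sum.elim (fun _ : Fin (ε+1) × Fin n => (0:𝕜)) (Sum.elim (fun _ : Fin ℓ => (0:𝕜))
        (fun r => star (y (.inl (.inr (r, c)))))))
      = ∑ r : Fin η × Fin m, ‖y (.inl (.inr (r, c)))‖ ^ 2 := by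
    simp [sqn, Fintype.sum_sum_type]
  simpa only [e0, ea, eb] using hco

set_option maxHeartbeats 1000000 in
lemma group2 {m n ℓ ε η : ℕ}
    (Δ11a Δ11b : Matrix (Fin (η+1) × Fin m) (Fin (ε+1) × Fin n) 𝕜)
    (Δ12a Δ12b : Matrix (Fin (η+1) × Fin m) (Fin ℓ) 𝕜)
    (Δ13a Δ13b : Matrix (Fin (η+1) × Fin m) (Fin η × Fin m) 𝕜)
    (Δ21a Δ21b : Matrix (Fin ℓ) (Fin (ε+1) × Fin n) 𝕜)
    (Δ22a Δ22b : Matrix (Fin ℓ) (Fin ℓ) 𝕜)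
    (Δ23a Δ23b : Matrix (Fin ℓ) (Fin η × Fin m) 𝕜)
    (Δ31a Δ31b : Matrix (Fin ε × Fin n) (Fin (ε+1) × Fin n) 𝕜)
    (Δ32a Δ32b : Matrix (Fin ε × Fin n) (Fin ℓ) 𝕜)
    (Δ33a Δ33b : Matrix (Fin ε × Fin n) (Fin η × Fin m) 𝕜)
    (ca cb : ℝ) (hca : 0 ≤ ca) (hcb : 0 ≤ cb)
    (hSaF : ∀ w, sqn (blocks3 Δ11a Δ12a Δ13a Δ21a Δ22a Δ23a Δ31a Δ32a Δ33a *ᵥ w) ≤ ca * sqn w)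
    (hSbF : ∀ w, sqn (blocks3 Δ11b Δ12b Δ13b Δ21b Δ22b Δ23b Δ31b Δ32b Δ33b *ᵥ w) ≤ cb * sqn w)
    (y : TRow m ℓ ε η n → 𝕜) (e : Fin ε × Fin n) :
    ((∑ j : Fin (η+1) × Fin m, ‖((DeltaT m n ℓ ε η Δ12a Δ12b Δ13a Δ13b Δ21a Δ21b Δ22a Δ22b Δ23a Δ23b Δ31a Δ31b Δ32a Δ32b)ᴴ *ᵥ y) (.inr (.inr (.inl (j, e))))‖ ^ 2)
      + (∑ c : Fin ℓ, ‖((DeltaT m n ℓ ε η Δ12a Δ12b Δ13a Δ13b Δ21a Δ21b Δ22a Δ22b Δ23a Δ23b Δ31a Δ31b Δ32a Δ32b)ᴴ *ᵥ y) (.inr (.inl (.inl (c, e))))‖ ^ 2))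
      ≤ (ca + cb) * (((∑ c : Fin ℓ, ‖y (.inr (.inl (.inl (c, e))))‖ ^ 2)
            + (∑ r : Fin η × Fin m, ‖y (.inr (.inr (.inl (r, e))))‖ ^ 2))
          + ((∑ c : Fin ℓ, ‖y (.inr (.inl (.inr (c, e))))‖ ^ 2)
            + (∑ r : Fin η × Fin m, ‖y (.inr (.inr (.inr (r, e))))‖ ^ 2))) := by
  obtain ⟨e1, e2⟩ := e
  have hco := combo_bound (blocks3 Δ11a Δ12a Δ13a Δ21a Δ22a Δ23a Δ31a Δ32a Δ33a) (blocks3 Δ11b Δ12b Δ13b Δ21b Δ22b Δ23b Δ31b Δ32b Δ33b) ca cb hca hcb hSaF hSbF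
    (Sum.elim (fun _ : Fin (ε+1) × Fin n => (0:𝕜)) (Sum.elim
      (fun c => star (y (.inr (.inl (.inl (c, (e1, e2)))))))
      (fun r => star (y (.inr (.inr (.inl (r, (e1, e2)))))))))
    (Sum.elim (fun _ : Fin (ε+1) × Fin n => (0:𝕜)) (Sum.elim
      (fun c => star (y (.inr (.inl (.inr (c, (e1, e2)))))))
      (fun r => star (y (.inr (.inr (.inr (r, (e1, e2)))))))))
    (Sum.map id Sum.inl :
      (Fin (η+1) × Fin m) ⊕ Fin ℓ → (Fin (η+1) × Fin m) ⊕ (Fin ℓ ⊕ Fin ε × Fin n))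
    (Function.injective_id.sumMap Sum.inl_injective)
    (Sum.elim (fun j => star (((DeltaT m n ℓ ε η Δ12a Δ12b Δ13a Δ13b Δ21a Δ21b Δ22a Δ22b Δ23a Δ23b Δ31a Δ31b Δ32a Δ32b)ᴴ *ᵥ y) (.inr (.inr (.inl (j, (e1, e2)))))))
      (fun c => star (((DeltaT m n ℓ ε η Δ12a Δ12b Δ13a Δ13b Δ21a Δ21b Δ22a Δ22b Δ23a Δ23b Δ31a Δ31b Δ32a Δ32b)ᴴ *ᵥ y) (.inr (.inl (.inl (c, (e1, e2))))))))
    (by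
      rintro (j | c) <;>
      simp only [DeltaT, blocks3, Matrix.mulVec, dotProduct,
            Matrix.conjTranspose_apply, Fintype.sum_sum_type, Fintype.sum_prod_type,
            Matrix.fromRows_apply_inl, Matrix.fromRows_apply_inr, Matrix.fromCols_apply_inl,
            Matrix.fromCols_apply_inr, Matrix.fromBlocks_apply₁₁, Matrix.fromBlocks_apply₁₂,
            Matrix.fromBlocks_apply₂₁, Matrix.fromBlocks_apply₂₂, Matrix.of_apply,
            Sum.elim_inl, Sum.elim_inr, Sum.map_inl, Sum.map_inr, id_eq,
            Matrix.kroneckerMap_apply, Matrix.one_apply,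
            Matrix.transpose_apply, Matrix.zero_apply, Matrix.submatrix_apply,
            star_sum, star_add, S6.star_ite, star_mul', star_star, star_zero, star_one,
            mul_ite, ite_mul, mul_one, one_mul, mul_zero, zero_mul,
            Prod.mk.injEq, ite_and, Finset.sum_ite_irrel,
            Finset.sum_ite_eq, Finset.sum_ite_eq', Finset.mem_univ, if_true,
            Finset.sum_const_zero, add_zero, zero_add,
            Pi.star_apply] <;>
          ring)
  have e0 : sqn (Sum.elim
        (fun j : Fin (η+1) × Fin m => star (((DeltaT m n ℓ ε η Δ12a Δ12b Δ13a Δ13b Δ21a Δ21b Δ22a Δ22b Δ23a Δ23b Δ31a Δ31b Δ32a Δ32b)ᴴ *ᵥ y) (.inr (.inr (.inl (j, (e1, e2)))))))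
        (fun c : Fin ℓ => star (((DeltaT m n ℓ ε η Δ12a Δ12b Δ13a Δ13b Δ21a Δ21b Δ22a Δ22b Δ23a Δ23b Δ31a Δ31b Δ32a Δ32b)ᴴ *ᵥ y) (.inr (.inl (.inl (c, (e1, e2))))))))
      = (∑ j : Fin (η+1) × Fin m, ‖((DeltaT m n ℓ ε η Δ12a Δ12b Δ13a Δ13b Δ21a Δ21b Δ22a Δ22b Δ23a Δ23b Δ31a Δ31b Δ32a Δ32b)ᴴ *ᵥ y) (.inr (.inr (.inl (j, (e1, e2)))))‖ ^ 2)
        + (∑ c : Fin ℓ, ‖((DeltaT m n ℓ ε η Δ12a Δ12b Δ13a Δ13b Δ21a Δ21b Δ22a Δ22b Δ23a Δ23b Δ31a Δ31b Δ32a Δ32b)ᴴ *ᵥ y) (.inr (.inl (.inl (c, (e1, e2)))))‖ ^ 2) := by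
    simp [sqn, Fintype.sum_sum_type]
  have ea : sqn (Sum.elim (fun _ : Fin (ε+1) × Fin n => (0:𝕜)) (Sum.elim
        (fun c => star (y (.inr (.inl (.inl (c, (e1, e2)))))))
        (fun r => star (y (.inr (.inr (.inl (r, (e1, e2)))))))))
      = (∑ c : Fin ℓ, ‖y (.inr (.inl (.inl (c, (e1, e2)))))‖ ^ 2)
        + (∑ r : Fin η × Fin m, ‖y (.inr (.inr (.inl (r, (e1, e2)))))‖ ^ 2) := by
    simp [sqn, Fintype.sum_sum_type]
  have eb : sqn (Sum.elim (fun _ : Fin (ε+1) × Fin n => (0:𝕜)) (Sum.elim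
        (fun c => star (y (.inr (.inl (.inr (c, (e1, e2)))))))
        (fun r => star (y (.inr (.inr (.inr (r, (e1, e2)))))))))
      = (∑ c : Fin ℓ, ‖y (.inr (.inl (.inr (c, (e1, e2)))))‖ ^ 2)
        + (∑ r : Fin η × Fin m, ‖y (.inr (.inr (.inr (r, (e1, e2)))))‖ ^ 2) := by
    simp [sqn, Fintype.sum_sum_type]
  simpa only [e0, ea, eb] using hco

set_option maxHeartbeats 1000000 in
lemma group3 {m n ℓ ε η : ℕ}
    (Δ11a Δ11b : Matrix (Fin (η+1) × Fin m) (Fin (ε+1) × Fin n) 𝕜)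
    (Δ12a Δ12b : Matrix (Fin (η+1) × Fin m) (Fin ℓ) 𝕜)
    (Δ13a Δ13b : Matrix (Fin (η+1) × Fin m) (Fin η × Fin m) 𝕜)
    (Δ21a Δ21b : Matrix (Fin ℓ) (Fin (ε+1) × Fin n) 𝕜)
    (Δ22a Δ22b : Matrix (Fin ℓ) (Fin ℓ) 𝕜)
    (Δ23a Δ23b : Matrix (Fin ℓ) (Fin η × Fin m) 𝕜)
    (Δ31a Δ31b : Matrix (Fin ε × Fin n) (Fin (ε+1) × Fin n) 𝕜)
    (Δ32a Δ32b : Matrix (Fin ε × Fin n) (Fin ℓ) 𝕜)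
    (Δ33a Δ33b : Matrix (Fin ε × Fin n) (Fin η × Fin m) 𝕜)
    (ca cb : ℝ) (hca : 0 ≤ ca) (hcb : 0 ≤ cb)
    (hSaH : ∀ w, sqn ((blocks3 Δ11a Δ12a Δ13a Δ21a Δ22a Δ23a Δ31a Δ32a Δ33a)ᴴ *ᵥ w) ≤ ca * sqn w)
    (hSbH : ∀ w, sqn ((blocks3 Δ11b Δ12b Δ13b Δ21b Δ22b Δ23b Δ31b Δ32b Δ33b)ᴴ *ᵥ w) ≤ cb * sqn w)
    (y : TRow m ℓ ε η n → 𝕜) (r : Fin ℓ) :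
    (∑ j : Fin (ε+1) × Fin n, ‖((DeltaT m n ℓ ε η Δ12a Δ12b Δ13a Δ13b Δ21a Δ21b Δ22a Δ22b Δ23a Δ23b Δ31a Δ31b Δ32a Δ32b)ᴴ *ᵥ y) (.inr (.inl (.inr (r, j))))‖ ^ 2)
      ≤ (ca + cb) * ((∑ e : Fin ε × Fin n, ‖y (.inr (.inl (.inl (r, e))))‖ ^ 2)
          + (∑ e : Fin ε × Fin n, ‖y (.inr (.inl (.inr (r, e))))‖ ^ 2)) := by
  have hco := combo_bound ((blocks3 Δ11a Δ12a Δ13a Δ21a Δ22a Δ23a Δ31a Δ32a Δ33a)ᴴ) ((blocks3 Δ11b Δ12b Δ13b Δ21b Δ22b Δ23b Δ31b Δ32b Δ33b)ᴴ) ca cb hca hcb hSaH hSbH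
    (Sum.elim (fun _ : Fin (η+1) × Fin m => (0:𝕜)) (Sum.elim (fun _ : Fin ℓ => (0:𝕜))
      (fun e => y (.inr (.inl (.inl (r, e)))))))
    (Sum.elim (fun _ : Fin (η+1) × Fin m => (0:𝕜)) (Sum.elim (fun _ : Fin ℓ => (0:𝕜))
      (fun e => y (.inr (.inl (.inr (r, e)))))))
    Sum.inl Sum.inl_injective
    (fun j => ((DeltaT m n ℓ ε η Δ12a Δ12b Δ13a Δ13b Δ21a Δ21b Δ22a Δ22b Δ23a Δ23b Δ31a Δ31b Δ32a Δ32b)ᴴ *ᵥ y) (.inr (.inl (.inr (r, j)))))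
    (by
      intro j
      simp only [DeltaT, blocks3, Matrix.mulVec, dotProduct,
            Matrix.conjTranspose_apply, Fintype.sum_sum_type, Fintype.sum_prod_type,
            Matrix.fromRows_apply_inl, Matrix.fromRows_apply_inr, Matrix.fromCols_apply_inl,
            Matrix.fromCols_apply_inr, Matrix.fromBlocks_apply₁₁, Matrix.fromBlocks_apply₁₂,
            Matrix.fromBlocks_apply₂₁, Matrix.fromBlocks_apply₂₂, Matrix.of_apply,
            Sum.elim_inl, Sum.elim_inr, Sum.map_inl, Sum.map_inr, id_eq,
            Matrix.kroneckerMap_apply, Matrix.one_apply,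
            Matrix.transpose_apply, Matrix.zero_apply, Matrix.submatrix_apply,
            star_sum, star_add, S6.star_ite, star_mul', star_star, star_zero, star_one,
            mul_ite, ite_mul, mul_one, one_mul, mul_zero, zero_mul,
            Prod.mk.injEq, ite_and, Finset.sum_ite_irrel,
            Finset.sum_ite_eq, Finset.sum_ite_eq', Finset.mem_univ, if_true,
            Finset.sum_const_zero, add_zero, zero_add,
            Pi.star_apply] <;>
          ring)
  have e0 : sqn (fun j : Fin (ε+1) × Fin n => ((DeltaT m n ℓ ε η Δ12a Δ12b Δ13a Δ13b Δ21a Δ21b Δ22a Δ22b Δ23a Δ23b Δ31a Δ31b Δ32a Δ32b)ᴴ *ᵥ y) (.inr (.inl (.inr (r, j)))))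
      = ∑ j : Fin (ε+1) × Fin n, ‖((DeltaT m n ℓ ε η Δ12a Δ12b Δ13a Δ13b Δ21a Δ21b Δ22a Δ22b Δ23a Δ23b Δ31a Δ31b Δ32a Δ32b)ᴴ *ᵥ y) (.inr (.inl (.inr (r, j))))‖ ^ 2 := by
    simp [sqn]
  have ea : sqn (Sum.elim (fun _ : Fin (η+1) × Fin m => (0:𝕜)) (Sum.elim (fun _ : Fin ℓ => (0:𝕜))
        (fun e => y (.inr (.inl (.inl (r, e)))))))
      = ∑ e : Fin ε × Fin n, ‖y (.inr (.inl (.inl (r, e))))‖ ^ 2 := by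
    simp [sqn, Fintype.sum_sum_type]
  have eb : sqn (Sum.elim (fun _ : Fin (η+1) × Fin m => (0:𝕜)) (Sum.elim (fun _ : Fin ℓ => (0:𝕜))
        (fun e => y (.inr (.inl (.inr (r, e)))))))
      = ∑ e : Fin ε × Fin n, ‖y (.inr (.inl (.inr (r, e))))‖ ^ 2 := by
    simp [sqn, Fintype.sum_sum_type]
  simpa only [e0, ea, eb] using hco

set_option maxHeartbeats 1000000 in
lemma group4 {m n ℓ ε η : ℕ}
    (Δ11a Δ11b : Matrix (Fin (η+1) × Fin m) (Fin (ε+1) × Fin n) 𝕜)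
    (Δ12a Δ12b : Matrix (Fin (η+1) × Fin m) (Fin ℓ) 𝕜)
    (Δ13a Δ13b : Matrix (Fin (η+1) × Fin m) (Fin η × Fin m) 𝕜)
    (Δ21a Δ21b : Matrix (Fin ℓ) (Fin (ε+1) × Fin n) 𝕜)
    (Δ22a Δ22b : Matrix (Fin ℓ) (Fin ℓ) 𝕜)
    (Δ23a Δ23b : Matrix (Fin ℓ) (Fin η × Fin m) 𝕜)
    (Δ31a Δ31b : Matrix (Fin ε × Fin n) (Fin (ε+1) × Fin n) 𝕜)
    (Δ32a Δ32b : Matrix (Fin ε × Fin n) (Fin ℓ) 𝕜)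
    (Δ33a Δ33b : Matrix (Fin ε × Fin n) (Fin η × Fin m) 𝕜)
    (ca cb : ℝ) (hca : 0 ≤ ca) (hcb : 0 ≤ cb)
    (hSaH : ∀ w, sqn ((blocks3 Δ11a Δ12a Δ13a Δ21a Δ22a Δ23a Δ31a Δ32a Δ33a)ᴴ *ᵥ w) ≤ ca * sqn w)
    (hSbH : ∀ w, sqn ((blocks3 Δ11b Δ12b Δ13b Δ21b Δ22b Δ23b Δ31b Δ32b Δ33b)ᴴ *ᵥ w) ≤ cb * sqn w)
    (y : TRow m ℓ ε η n → 𝕜) (r : Fin η × Fin m) :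
    ((∑ j : Fin (ε+1) × Fin n, ‖((DeltaT m n ℓ ε η Δ12a Δ12b Δ13a Δ13b Δ21a Δ21b Δ22a Δ22b Δ23a Δ23b Δ31a Δ31b Δ32a Δ32b)ᴴ *ᵥ y) (.inr (.inr (.inr (r, j))))‖ ^ 2)
      + (∑ c : Fin ℓ, ‖((DeltaT m n ℓ ε η Δ12a Δ12b Δ13a Δ13b Δ21a Δ21b Δ22a Δ22b Δ23a Δ23b Δ31a Δ31b Δ32a Δ32b)ᴴ *ᵥ y) (.inl (.inr (r, c)))‖ ^ 2))
      ≤ (ca + cb) * (((∑ c : Fin ℓ, ‖y (.inl (.inl (r, c)))‖ ^ 2)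
            + (∑ e : Fin ε × Fin n, ‖y (.inr (.inr (.inl (r, e))))‖ ^ 2))
          + ((∑ c : Fin ℓ, ‖y (.inl (.inr (r, c)))‖ ^ 2)
            + (∑ e : Fin ε × Fin n, ‖y (.inr (.inr (.inr (r, e))))‖ ^ 2))) := by
  obtain ⟨r1, r2⟩ := r
  have hco := combo_bound ((blocks3 Δ11a Δ12a Δ13a Δ21a Δ22a Δ23a Δ31a Δ32a Δ33a)ᴴ) ((blocks3 Δ11b Δ12b Δ13b Δ21b Δ22b Δ23b Δ31b Δ32b Δ33b)ᴴ) ca cb hca hcb hSaH hSbH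
    (Sum.elim (fun _ : Fin (η+1) × Fin m => (0:𝕜)) (Sum.elim
      (fun c => y (.inl (.inl ((r1, r2), c))))
      (fun e => y (.inr (.inr (.inl ((r1, r2), e)))))))
    (Sum.elim (fun _ : Fin (η+1) × Fin m => (0:𝕜)) (Sum.elim
      (fun c => y (.inl (.inr ((r1, r2), c))))
      (fun e => y (.inr (.inr (.inr ((r1, r2), e)))))))
    (Sum.map id Sum.inl :
      (Fin (ε+1) × Fin n) ⊕ Fin ℓ → (Fin (ε+1) × Fin n) ⊕ (Fin ℓ ⊕ Fin η × Fin m))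
    (Function.injective_id.sumMap Sum.inl_injective)
    (Sum.elim (fun j => ((DeltaT m n ℓ ε η Δ12a Δ12b Δ13a Δ13b Δ21a Δ21b Δ22a Δ22b Δ23a Δ23b Δ31a Δ31b Δ32a Δ32b)ᴴ *ᵥ y) (.inr (.inr (.inr ((r1, r2), j)))))
      (fun c => ((DeltaT m n ℓ ε η Δ12a Δ12b Δ13a Δ13b Δ21a Δ21b Δ22a Δ22b Δ23a Δ23b Δ31a Δ31b Δ32a Δ32b)ᴴ *ᵥ y) (.inl (.inr ((r1, r2), c)))))
    (by
      rintro (j | c) <;>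
      simp only [DeltaT, blocks3, Matrix.mulVec, dotProduct,
            Matrix.conjTranspose_apply, Fintype.sum_sum_type, Fintype.sum_prod_type,
            Matrix.fromRows_apply_inl, Matrix.fromRows_apply_inr, Matrix.fromCols_apply_inl,
            Matrix.fromCols_apply_inr, Matrix.fromBlocks_apply₁₁, Matrix.fromBlocks_apply₁₂,
            Matrix.fromBlocks_apply₂₁, Matrix.fromBlocks_apply₂₂, Matrix.of_apply,
            Sum.elim_inl, Sum.elim_inr, Sum.map_inl, Sum.map_inr, id_eq,
            Matrix.kroneckerMap_apply, Matrix.one_apply,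
            Matrix.transpose_apply, Matrix.zero_apply, Matrix.submatrix_apply,
            star_sum, star_add, S6.star_ite, star_mul', star_star, star_zero, star_one,
            mul_ite, ite_mul, mul_one, one_mul, mul_zero, zero_mul,
            Prod.mk.injEq, ite_and, Finset.sum_ite_irrel,
            Finset.sum_ite_eq, Finset.sum_ite_eq', Finset.mem_univ, if_true,
            Finset.sum_const_zero, add_zero, zero_add,
            Pi.star_apply] <;>
          ring)
  have e0 : sqn (Sum.elim
        (fun j : Fin (ε+1) × Fin n => ((DeltaT m n ℓ ε η Δ12a Δ12b Δ13a Δ13b Δ21a Δ21b Δ22a Δ22b Δ23a Δ23b Δ31a Δ31b Δ32a Δ32b)ᴴ *ᵥ y) (.inr (.inr (.inr ((r1, r2), j)))))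
        (fun c : Fin ℓ => ((DeltaT m n ℓ ε η Δ12a Δ12b Δ13a Δ13b Δ21a Δ21b Δ22a Δ22b Δ23a Δ23b Δ31a Δ31b Δ32a Δ32b)ᴴ *ᵥ y) (.inl (.inr ((r1, r2), c)))))
      = (∑ j : Fin (ε+1) × Fin n, ‖((DeltaT m n ℓ ε η Δ12a Δ12b Δ13a Δ13b Δ21a Δ21b Δ22a Δ22b Δ23a Δ23b Δ31a Δ31b Δ32a Δ32b)ᴴ *ᵥ y) (.inr (.inr (.inr ((r1, r2), j))))‖ ^ 2)
        + (∑ c : Fin ℓ, ‖((DeltaT m n ℓ ε η Δ12a Δ12b Δ13a Δ13b Δ21a Δ21b Δ22a Δ22b Δ23a Δ23b Δ31a Δ31b Δ32a Δ32b)ᴴ *ᵥ y) (.inl (.inr ((r1, r2), c)))‖ ^ 2) := by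
    simp [sqn, Fintype.sum_sum_type]
  have ea : sqn (Sum.elim (fun _ : Fin (η+1) × Fin m => (0:𝕜)) (Sum.elim
        (fun c => y (.inl (.inl ((r1, r2), c))))
        (fun e => y (.inr (.inr (.inl ((r1, r2), e)))))))
      = (∑ c : Fin ℓ, ‖y (.inl (.inl ((r1, r2), c)))‖ ^ 2)
        + (∑ e : Fin ε × Fin n, ‖y (.inr (.inr (.inl ((r1, r2), e))))‖ ^ 2) := by
    simp [sqn, Fintype.sum_sum_type]
  have eb : sqn (Sum.elim (fun _ : Fin (η+1) × Fin m => (0:𝕜)) (Sum.elim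
        (fun c => y (.inl (.inr ((r1, r2), c))))
        (fun e => y (.inr (.inr (.inr ((r1, r2), e)))))))
      = (∑ c : Fin ℓ, ‖y (.inl (.inr ((r1, r2), c)))‖ ^ 2)
        + (∑ e : Fin ε × Fin n, ‖y (.inr (.inr (.inr ((r1, r2), e))))‖ ^ 2) := by
    simp [sqn, Fintype.sum_sum_type]
  simpa only [e0, ea, eb] using hco


lemma final_combine (W a1 a2 a3 a4 a5 a6 s1 s2 s3 s4 s5 s6 : ℝ)
    (hW : 0 ≤ W) (h1 : 0 ≤ a1) (h2 : 0 ≤ a2) (h3 : 0 ≤ a3) (h4 : 0 ≤ a4)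
    (h5 : 0 ≤ a5) (h6 : 0 ≤ a6)
    (B1 : s1 ≤ W * (a1 + a2)) (B2 : s5 + s3 ≤ W * ((a3 + a5) + (a4 + a6)))
    (B3 : s4 ≤ W * (a3 + a4)) (B4 : s6 + s2 ≤ W * ((a1 + a5) + (a2 + a6))) :
    (s1 + s2) + ((s3 + s4) + (s5 + s6)) ≤ (3 * W) * ((a1 + a2) + ((a3 + a4) + (a5 + a6))) := by
  nlinarith [mul_nonneg hW h1, mul_nonneg hW h2, mul_nonneg hW h3, mul_nonneg hW h4,
    mul_nonneg hW h5, mul_nonneg hW h6]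


set_option maxHeartbeats 4000000 in
lemma keyLemma {m n ℓ ε η : ℕ}
    (Δ11a Δ11b : Matrix (Fin (η+1) × Fin m) (Fin (ε+1) × Fin n) 𝕜)
    (Δ12a Δ12b : Matrix (Fin (η+1) × Fin m) (Fin ℓ) 𝕜)
    (Δ13a Δ13b : Matrix (Fin (η+1) × Fin m) (Fin η × Fin m) 𝕜)
    (Δ21a Δ21b : Matrix (Fin ℓ) (Fin (ε+1) × Fin n) 𝕜)
    (Δ22a Δ22b : Matrix (Fin ℓ) (Fin ℓ) 𝕜)
    (Δ23a Δ23b : Matrix (Fin ℓ) (Fin η × Fin m) 𝕜)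
    (Δ31a Δ31b : Matrix (Fin ε × Fin n) (Fin (ε+1) × Fin n) 𝕜)
    (Δ32a Δ32b : Matrix (Fin ε × Fin n) (Fin ℓ) 𝕜)
    (Δ33a Δ33b : Matrix (Fin ε × Fin n) (Fin η × Fin m) 𝕜)
    (ca cb : ℝ) (hca : 0 ≤ ca) (hcb : 0 ≤ cb)
    (hSaF : ∀ w, sqn (blocks3 Δ11a Δ12a Δ13a Δ21a Δ22a Δ23a Δ31a Δ32a Δ33a *ᵥ w) ≤ ca * sqn w)
    (hSbF : ∀ w, sqn (blocks3 Δ11b Δ12b Δ13b Δ21b Δ22b Δ23b Δ31b Δ32b Δ33b *ᵥ w) ≤ cb * sqn w)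
    (hSaH : ∀ w, sqn ((blocks3 Δ11a Δ12a Δ13a Δ21a Δ22a Δ23a Δ31a Δ32a Δ33a)ᴴ *ᵥ w) ≤ ca * sqn w)
    (hSbH : ∀ w, sqn ((blocks3 Δ11b Δ12b Δ13b Δ21b Δ22b Δ23b Δ31b Δ32b Δ33b)ᴴ *ᵥ w) ≤ cb * sqn w)
    (y : TRow m ℓ ε η n → 𝕜) :
    sqn ((DeltaT m n ℓ ε η Δ12a Δ12b Δ13a Δ13b Δ21a Δ21b Δ22a Δ22b Δ23a Δ23b Δ31a Δ31b Δ32a Δ32b)ᴴ *ᵥ y) ≤ (3 * (ca + cb)) * sqn y := by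
    have hg1 := group1 Δ11a Δ11b Δ12a Δ12b Δ13a Δ13b Δ21a Δ21b Δ22a Δ22b Δ23a Δ23b
      Δ31a Δ31b Δ32a Δ32b Δ33a Δ33b ca cb hca hcb
      hSaF hSbF y
    have hg2 := group2 Δ11a Δ11b Δ12a Δ12b Δ13a Δ13b Δ21a Δ21b Δ22a Δ22b Δ23a Δ23b
      Δ31a Δ31b Δ32a Δ32b Δ33a Δ33b ca cb hca hcb
      hSaF hSbF y
    have hg3 := group3 Δ11a Δ11b Δ12a Δ12b Δ13a Δ13b Δ21a Δ21b Δ22a Δ22b Δ23a Δ23b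
      Δ31a Δ31b Δ32a Δ32b Δ33a Δ33b ca cb hca hcb
      hSaH hSbH y
    have hg4 := group4 Δ11a Δ11b Δ12a Δ12b Δ13a Δ13b Δ21a Δ21b Δ22a Δ22b Δ23a Δ23b
      Δ31a Δ31b Δ32a Δ32b Δ33a Δ33b ca cb hca hcb
      hSaH hSbH y
    have hsplit : sqn ((DeltaT m n ℓ ε η Δ12a Δ12b Δ13a Δ13b Δ21a Δ21b Δ22a Δ22b Δ23a Δ23b Δ31a Δ31b Δ32a Δ32b)ᴴ *ᵥ y) =
        ((∑ jc : (Fin (η+1) × Fin m) × Fin ℓ, ‖((DeltaT m n ℓ ε η Δ12a Δ12b Δ13a Δ13b Δ21a Δ21b Δ22a Δ22b Δ23a Δ23b Δ31a Δ31b Δ32a Δ32b)ᴴ *ᵥ y) (.inl (.inl jc))‖ ^ 2)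
          + (∑ jc : (Fin η × Fin m) × Fin ℓ, ‖((DeltaT m n ℓ ε η Δ12a Δ12b Δ13a Δ13b Δ21a Δ21b Δ22a Δ22b Δ23a Δ23b Δ31a Δ31b Δ32a Δ32b)ᴴ *ᵥ y) (.inl (.inr jc))‖ ^ 2))
        + (((∑ jc : Fin ℓ × (Fin ε × Fin n), ‖((DeltaT m n ℓ ε η Δ12a Δ12b Δ13a Δ13b Δ21a Δ21b Δ22a Δ22b Δ23a Δ23b Δ31a Δ31b Δ32a Δ32b)ᴴ *ᵥ y) (.inr (.inl (.inl jc)))‖ ^ 2)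
          + (∑ jc : Fin ℓ × (Fin (ε+1) × Fin n),
                ‖((DeltaT m n ℓ ε η Δ12a Δ12b Δ13a Δ13b Δ21a Δ21b Δ22a Δ22b Δ23a Δ23b Δ31a Δ31b Δ32a Δ32b)ᴴ *ᵥ y) (.inr (.inl (.inr jc)))‖ ^ 2))
          + ((∑ jc : (Fin (η+1) × Fin m) × (Fin ε × Fin n),
                ‖((DeltaT m n ℓ ε η Δ12a Δ12b Δ13a Δ13b Δ21a Δ21b Δ22a Δ22b Δ23a Δ23b Δ31a Δ31b Δ32a Δ32b)ᴴ *ᵥ y) (.inr (.inr (.inl jc)))‖ ^ 2)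
          + (∑ jc : (Fin η × Fin m) × (Fin (ε+1) × Fin n),
                ‖((DeltaT m n ℓ ε η Δ12a Δ12b Δ13a Δ13b Δ21a Δ21b Δ22a Δ22b Δ23a Δ23b Δ31a Δ31b Δ32a Δ32b)ᴴ *ᵥ y) (.inr (.inr (.inr jc)))‖ ^ 2))) := by
      simp only [sqn, Fintype.sum_sum_type]
    have hy : sqn y =
        ((∑ rc : (Fin η × Fin m) × Fin ℓ, ‖y (.inl (.inl rc))‖ ^ 2)
          + (∑ rc : (Fin η × Fin m) × Fin ℓ, ‖y (.inl (.inr rc))‖ ^ 2))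
        + (((∑ rc : Fin ℓ × (Fin ε × Fin n), ‖y (.inr (.inl (.inl rc)))‖ ^ 2)
          + (∑ rc : Fin ℓ × (Fin ε × Fin n), ‖y (.inr (.inl (.inr rc)))‖ ^ 2))
          + ((∑ rc : (Fin η × Fin m) × (Fin ε × Fin n), ‖y (.inr (.inr (.inl rc)))‖ ^ 2)
          + (∑ rc : (Fin η × Fin m) × (Fin ε × Fin n), ‖y (.inr (.inr (.inr rc)))‖ ^ 2))) := by
      simp only [sqn, Fintype.sum_sum_type]
    -- pair sums as iterated sums, slice index outermost
    have r1 : (∑ jc : (Fin (η+1) × Fin m) × Fin ℓ, ‖((DeltaT m n ℓ ε η Δ12a Δ12b Δ13a Δ13b Δ21a Δ21b Δ22a Δ22b Δ23a Δ23b Δ31a Δ31b Δ32a Δ32b)ᴴ *ᵥ y) (.inl (.inl jc))‖ ^ 2)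
        = ∑ c : Fin ℓ, ∑ j : Fin (η+1) × Fin m, ‖((DeltaT m n ℓ ε η Δ12a Δ12b Δ13a Δ13b Δ21a Δ21b Δ22a Δ22b Δ23a Δ23b Δ31a Δ31b Δ32a Δ32b)ᴴ *ᵥ y) (.inl (.inl (j, c)))‖ ^ 2 := by
      rw [Fintype.sum_prod_type]; exact Finset.sum_comm
    have r2 : (∑ jc : (Fin η × Fin m) × Fin ℓ, ‖((DeltaT m n ℓ ε η Δ12a Δ12b Δ13a Δ13b Δ21a Δ21b Δ22a Δ22b Δ23a Δ23b Δ31a Δ31b Δ32a Δ32b)ᴴ *ᵥ y) (.inl (.inr jc))‖ ^ 2)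
        = ∑ r : Fin η × Fin m, ∑ c : Fin ℓ, ‖((DeltaT m n ℓ ε η Δ12a Δ12b Δ13a Δ13b Δ21a Δ21b Δ22a Δ22b Δ23a Δ23b Δ31a Δ31b Δ32a Δ32b)ᴴ *ᵥ y) (.inl (.inr (r, c)))‖ ^ 2 :=
      Fintype.sum_prod_type _
    have r3 : (∑ jc : Fin ℓ × (Fin ε × Fin n), ‖((DeltaT m n ℓ ε η Δ12a Δ12b Δ13a Δ13b Δ21a Δ21b Δ22a Δ22b Δ23a Δ23b Δ31a Δ31b Δ32a Δ32b)ᴴ *ᵥ y) (.inr (.inl (.inl jc)))‖ ^ 2)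
        = ∑ e : Fin ε × Fin n, ∑ c : Fin ℓ,
            ‖((DeltaT m n ℓ ε η Δ12a Δ12b Δ13a Δ13b Δ21a Δ21b Δ22a Δ22b Δ23a Δ23b Δ31a Δ31b Δ32a Δ32b)ᴴ *ᵥ y) (.inr (.inl (.inl (c, e))))‖ ^ 2 := by
      rw [Fintype.sum_prod_type]; exact Finset.sum_comm
    have r4 : (∑ jc : Fin ℓ × (Fin (ε+1) × Fin n),
          ‖((DeltaT m n ℓ ε η Δ12a Δ12b Δ13a Δ13b Δ21a Δ21b Δ22a Δ22b Δ23a Δ23b Δ31a Δ31b Δ32a Δ32b)ᴴ *ᵥ y) (.inr (.inl (.inr jc)))‖ ^ 2)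
        = ∑ r : Fin ℓ, ∑ j : Fin (ε+1) × Fin n,
            ‖((DeltaT m n ℓ ε η Δ12a Δ12b Δ13a Δ13b Δ21a Δ21b Δ22a Δ22b Δ23a Δ23b Δ31a Δ31b Δ32a Δ32b)ᴴ *ᵥ y) (.inr (.inl (.inr (r, j))))‖ ^ 2 :=
      Fintype.sum_prod_type _
    have r5 : (∑ jc : (Fin (η+1) × Fin m) × (Fin ε × Fin n),
          ‖((DeltaT m n ℓ ε η Δ12a Δ12b Δ13a Δ13b Δ21a Δ21b Δ22a Δ22b Δ23a Δ23b Δ31a Δ31b Δ32a Δ32b)ᴴ *ᵥ y) (.inr (.inr (.inl jc)))‖ ^ 2)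
        = ∑ e : Fin ε × Fin n, ∑ j : Fin (η+1) × Fin m,
            ‖((DeltaT m n ℓ ε η Δ12a Δ12b Δ13a Δ13b Δ21a Δ21b Δ22a Δ22b Δ23a Δ23b Δ31a Δ31b Δ32a Δ32b)ᴴ *ᵥ y) (.inr (.inr (.inl (j, e))))‖ ^ 2 := by
      rw [Fintype.sum_prod_type]; exact Finset.sum_comm
    have r6 : (∑ jc : (Fin η × Fin m) × (Fin (ε+1) × Fin n),
          ‖((DeltaT m n ℓ ε η Δ12a Δ12b Δ13a Δ13b Δ21a Δ21b Δ22a Δ22b Δ23a Δ23b Δ31a Δ31b Δ32a Δ32b)ᴴ *ᵥ y) (.inr (.inr (.inr jc)))‖ ^ 2)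
        = ∑ r : Fin η × Fin m, ∑ j : Fin (ε+1) × Fin n,
            ‖((DeltaT m n ℓ ε η Δ12a Δ12b Δ13a Δ13b Δ21a Δ21b Δ22a Δ22b Δ23a Δ23b Δ31a Δ31b Δ32a Δ32b)ᴴ *ᵥ y) (.inr (.inr (.inr (r, j))))‖ ^ 2 :=
      Fintype.sum_prod_type _
    -- iterated forms of the pieces of `y`
    have ha1 : (∑ rc : (Fin η × Fin m) × Fin ℓ, ‖y (.inl (.inl rc))‖ ^ 2)
        = ∑ c : Fin ℓ, ∑ r : Fin η × Fin m, ‖y (.inl (.inl (r, c)))‖ ^ 2 := by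
      rw [Fintype.sum_prod_type]; exact Finset.sum_comm
    have ha1' : (∑ rc : (Fin η × Fin m) × Fin ℓ, ‖y (.inl (.inl rc))‖ ^ 2)
        = ∑ r : Fin η × Fin m, ∑ c : Fin ℓ, ‖y (.inl (.inl (r, c)))‖ ^ 2 :=
      Fintype.sum_prod_type _
    have ha2 : (∑ rc : (Fin η × Fin m) × Fin ℓ, ‖y (.inl (.inr rc))‖ ^ 2)
        = ∑ c : Fin ℓ, ∑ r : Fin η × Fin m, ‖y (.inl (.inr (r, c)))‖ ^ 2 := by
      rw [Fintype.sum_prod_type]; exact Finset.sum_comm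
    have ha2' : (∑ rc : (Fin η × Fin m) × Fin ℓ, ‖y (.inl (.inr rc))‖ ^ 2)
        = ∑ r : Fin η × Fin m, ∑ c : Fin ℓ, ‖y (.inl (.inr (r, c)))‖ ^ 2 :=
      Fintype.sum_prod_type _
    have ha3 : (∑ rc : Fin ℓ × (Fin ε × Fin n), ‖y (.inr (.inl (.inl rc)))‖ ^ 2)
        = ∑ e : Fin ε × Fin n, ∑ c : Fin ℓ, ‖y (.inr (.inl (.inl (c, e))))‖ ^ 2 := by
      rw [Fintype.sum_prod_type]; exact Finset.sum_comm
    have ha3' : (∑ rc : Fin ℓ × (Fin ε × Fin n), ‖y (.inr (.inl (.inl rc)))‖ ^ 2)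
        = ∑ r : Fin ℓ, ∑ e : Fin ε × Fin n, ‖y (.inr (.inl (.inl (r, e))))‖ ^ 2 :=
      Fintype.sum_prod_type _
    have ha4 : (∑ rc : Fin ℓ × (Fin ε × Fin n), ‖y (.inr (.inl (.inr rc)))‖ ^ 2)
        = ∑ e : Fin ε × Fin n, ∑ c : Fin ℓ, ‖y (.inr (.inl (.inr (c, e))))‖ ^ 2 := by
      rw [Fintype.sum_prod_type]; exact Finset.sum_comm
    have ha4' : (∑ rc : Fin ℓ × (Fin ε × Fin n), ‖y (.inr (.inl (.inr rc)))‖ ^ 2)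
        = ∑ r : Fin ℓ, ∑ e : Fin ε × Fin n, ‖y (.inr (.inl (.inr (r, e))))‖ ^ 2 :=
      Fintype.sum_prod_type _
    have ha5 : (∑ rc : (Fin η × Fin m) × (Fin ε × Fin n), ‖y (.inr (.inr (.inl rc)))‖ ^ 2)
        = ∑ e : Fin ε × Fin n, ∑ r : Fin η × Fin m, ‖y (.inr (.inr (.inl (r, e))))‖ ^ 2 := by
      rw [Fintype.sum_prod_type]; exact Finset.sum_comm
    have ha5' : (∑ rc : (Fin η × Fin m) × (Fin ε × Fin n), ‖y (.inr (.inr (.inl rc)))‖ ^ 2)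
        = ∑ r : Fin η × Fin m, ∑ e : Fin ε × Fin n, ‖y (.inr (.inr (.inl (r, e))))‖ ^ 2 :=
      Fintype.sum_prod_type _
    have ha6 : (∑ rc : (Fin η × Fin m) × (Fin ε × Fin n), ‖y (.inr (.inr (.inr rc)))‖ ^ 2)
        = ∑ e : Fin ε × Fin n, ∑ r : Fin η × Fin m, ‖y (.inr (.inr (.inr (r, e))))‖ ^ 2 := by
      rw [Fintype.sum_prod_type]; exact Finset.sum_comm
    have ha6' : (∑ rc : (Fin η × Fin m) × (Fin ε × Fin n), ‖y (.inr (.inr (.inr rc)))‖ ^ 2)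
        = ∑ r : Fin η × Fin m, ∑ e : Fin ε × Fin n, ‖y (.inr (.inr (.inr (r, e))))‖ ^ 2 :=
      Fintype.sum_prod_type _
    -- summed group bounds
    have B1 : (∑ c : Fin ℓ, ∑ j : Fin (η+1) × Fin m,
            ‖((DeltaT m n ℓ ε η Δ12a Δ12b Δ13a Δ13b Δ21a Δ21b Δ22a Δ22b Δ23a Δ23b Δ31a Δ31b Δ32a Δ32b)ᴴ *ᵥ y) (.inl (.inl (j, c)))‖ ^ 2)
        ≤ (ca + cb) * ((∑ rc : (Fin η × Fin m) × Fin ℓ, ‖y (.inl (.inl rc))‖ ^ 2)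
            + (∑ rc : (Fin η × Fin m) × Fin ℓ, ‖y (.inl (.inr rc))‖ ^ 2)) := by
      calc _ ≤ ∑ c : Fin ℓ, (ca + cb)
              * ((∑ r : Fin η × Fin m, ‖y (.inl (.inl (r, c)))‖ ^ 2)
                + (∑ r : Fin η × Fin m, ‖y (.inl (.inr (r, c)))‖ ^ 2)) :=
            Finset.sum_le_sum fun c _ => hg1 c
        _ = _ := by
            rw [← Finset.mul_sum, Finset.sum_add_distrib, ← ha1, ← ha2]
    have B2 : (∑ e : Fin ε × Fin n, ∑ j : Fin (η+1) × Fin m,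
            ‖((DeltaT m n ℓ ε η Δ12a Δ12b Δ13a Δ13b Δ21a Δ21b Δ22a Δ22b Δ23a Δ23b Δ31a Δ31b Δ32a Δ32b)ᴴ *ᵥ y) (.inr (.inr (.inl (j, e))))‖ ^ 2)
          + (∑ e : Fin ε × Fin n, ∑ c : Fin ℓ,
            ‖((DeltaT m n ℓ ε η Δ12a Δ12b Δ13a Δ13b Δ21a Δ21b Δ22a Δ22b Δ23a Δ23b Δ31a Δ31b Δ32a Δ32b)ᴴ *ᵥ y) (.inr (.inl (.inl (c, e))))‖ ^ 2)
        ≤ (ca + cb) * (((∑ rc : Fin ℓ × (Fin ε × Fin n), ‖y (.inr (.inl (.inl rc)))‖ ^ 2)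
              + (∑ rc : (Fin η × Fin m) × (Fin ε × Fin n), ‖y (.inr (.inr (.inl rc)))‖ ^ 2))
            + ((∑ rc : Fin ℓ × (Fin ε × Fin n), ‖y (.inr (.inl (.inr rc)))‖ ^ 2)
              + (∑ rc : (Fin η × Fin m) × (Fin ε × Fin n),
                  ‖y (.inr (.inr (.inr rc)))‖ ^ 2))) := by
      calc _ = ∑ e : Fin ε × Fin n,
              ((∑ j : Fin (η+1) × Fin m, ‖((DeltaT m n ℓ ε η Δ12a Δ12b Δ13a Δ13b Δ21a Δ21b Δ22a Δ22b Δ23a Δ23b Δ31a Δ31b Δ32a Δ32b)ᴴ *ᵥ y) (.inr (.inr (.inl (j, e))))‖ ^ 2)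
                + (∑ c : Fin ℓ, ‖((DeltaT m n ℓ ε η Δ12a Δ12b Δ13a Δ13b Δ21a Δ21b Δ22a Δ22b Δ23a Δ23b Δ31a Δ31b Δ32a Δ32b)ᴴ *ᵥ y) (.inr (.inl (.inl (c, e))))‖ ^ 2)) :=
            Finset.sum_add_distrib.symm
        _ ≤ ∑ e : Fin ε × Fin n, (ca + cb)
              * (((∑ c : Fin ℓ, ‖y (.inr (.inl (.inl (c, e))))‖ ^ 2)
                + (∑ r : Fin η × Fin m, ‖y (.inr (.inr (.inl (r, e))))‖ ^ 2))
                + ((∑ c : Fin ℓ, ‖y (.inr (.inl (.inr (c, e))))‖ ^ 2)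
                + (∑ r : Fin η × Fin m, ‖y (.inr (.inr (.inr (r, e))))‖ ^ 2))) :=
            Finset.sum_le_sum fun e _ => hg2 e
        _ = _ := by
            rw [← Finset.mul_sum, Finset.sum_add_distrib, Finset.sum_add_distrib,
              Finset.sum_add_distrib, ← ha3, ← ha4, ← ha5, ← ha6]
    have B3 : (∑ r : Fin ℓ, ∑ j : Fin (ε+1) × Fin n,
            ‖((DeltaT m n ℓ ε η Δ12a Δ12b Δ13a Δ13b Δ21a Δ21b Δ22a Δ22b Δ23a Δ23b Δ31a Δ31b Δ32a Δ32b)ᴴ *ᵥ y) (.inr (.inl (.inr (r, j))))‖ ^ 2)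
        ≤ (ca + cb) * ((∑ rc : Fin ℓ × (Fin ε × Fin n), ‖y (.inr (.inl (.inl rc)))‖ ^ 2)
            + (∑ rc : Fin ℓ × (Fin ε × Fin n), ‖y (.inr (.inl (.inr rc)))‖ ^ 2)) := by
      calc _ ≤ ∑ r : Fin ℓ, (ca + cb)
              * ((∑ e : Fin ε × Fin n, ‖y (.inr (.inl (.inl (r, e))))‖ ^ 2)
                + (∑ e : Fin ε × Fin n, ‖y (.inr (.inl (.inr (r, e))))‖ ^ 2)) :=
            Finset.sum_le_sum fun r _ => hg3 r
        _ = _ := by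
            rw [← Finset.mul_sum, Finset.sum_add_distrib, ← ha3', ← ha4']
    have B4 : (∑ r : Fin η × Fin m, ∑ j : Fin (ε+1) × Fin n,
            ‖((DeltaT m n ℓ ε η Δ12a Δ12b Δ13a Δ13b Δ21a Δ21b Δ22a Δ22b Δ23a Δ23b Δ31a Δ31b Δ32a Δ32b)ᴴ *ᵥ y) (.inr (.inr (.inr (r, j))))‖ ^ 2)
          + (∑ r : Fin η × Fin m, ∑ c : Fin ℓ,
            ‖((DeltaT m n ℓ ε η Δ12a Δ12b Δ13a Δ13b Δ21a Δ21b Δ22a Δ22b Δ23a Δ23b Δ31a Δ31b Δ32a Δ32b)ᴴ *ᵥ y) (.inl (.inr (r, c)))‖ ^ 2)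
        ≤ (ca + cb) * (((∑ rc : (Fin η × Fin m) × Fin ℓ, ‖y (.inl (.inl rc))‖ ^ 2)
              + (∑ rc : (Fin η × Fin m) × (Fin ε × Fin n), ‖y (.inr (.inr (.inl rc)))‖ ^ 2))
            + ((∑ rc : (Fin η × Fin m) × Fin ℓ, ‖y (.inl (.inr rc))‖ ^ 2)
              + (∑ rc : (Fin η × Fin m) × (Fin ε × Fin n),
                  ‖y (.inr (.inr (.inr rc)))‖ ^ 2))) := by
      calc _ = ∑ r : Fin η × Fin m,
              ((∑ j : Fin (ε+1) × Fin n, ‖((DeltaT m n ℓ ε η Δ12a Δ12b Δ13a Δ13b Δ21a Δ21b Δ22a Δ22b Δ23a Δ23b Δ31a Δ31b Δ32a Δ32b)ᴴ *ᵥ y) (.inr (.inr (.inr (r, j))))‖ ^ 2)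
                + (∑ c : Fin ℓ, ‖((DeltaT m n ℓ ε η Δ12a Δ12b Δ13a Δ13b Δ21a Δ21b Δ22a Δ22b Δ23a Δ23b Δ31a Δ31b Δ32a Δ32b)ᴴ *ᵥ y) (.inl (.inr (r, c)))‖ ^ 2)) :=
            Finset.sum_add_distrib.symm
        _ ≤ ∑ r : Fin η × Fin m, (ca + cb)
              * (((∑ c : Fin ℓ, ‖y (.inl (.inl (r, c)))‖ ^ 2)
                + (∑ e : Fin ε × Fin n, ‖y (.inr (.inr (.inl (r, e))))‖ ^ 2))
                + ((∑ c : Fin ℓ, ‖y (.inl (.inr (r, c)))‖ ^ 2)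
                + (∑ e : Fin ε × Fin n, ‖y (.inr (.inr (.inr (r, e))))‖ ^ 2))) :=
            Finset.sum_le_sum fun r _ => hg4 r
        _ = _ := by
            rw [← Finset.mul_sum, Finset.sum_add_distrib, Finset.sum_add_distrib,
              Finset.sum_add_distrib, ← ha1', ← ha2', ← ha5', ← ha6']
    have hA1 := Finset.sum_nonneg (s := Finset.univ)
      (f := fun rc : (Fin η × Fin m) × Fin ℓ => ‖y (.inl (.inl rc))‖ ^ 2)
      (fun _ _ => sq_nonneg _)
    have hA2 := Finset.sum_nonneg (s := Finset.univ)
      (f := fun rc : (Fin η × Fin m) × Fin ℓ => ‖y (.inl (.inr rc))‖ ^ 2)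
      (fun _ _ => sq_nonneg _)
    have hA3 := Finset.sum_nonneg (s := Finset.univ)
      (f := fun rc : Fin ℓ × (Fin ε × Fin n) => ‖y (.inr (.inl (.inl rc)))‖ ^ 2)
      (fun _ _ => sq_nonneg _)
    have hA4 := Finset.sum_nonneg (s := Finset.univ)
      (f := fun rc : Fin ℓ × (Fin ε × Fin n) => ‖y (.inr (.inl (.inr rc)))‖ ^ 2)
      (fun _ _ => sq_nonneg _)
    have hA5 := Finset.sum_nonneg (s := Finset.univ)
      (f := fun rc : (Fin η × Fin m) × (Fin ε × Fin n) => ‖y (.inr (.inr (.inl rc)))‖ ^ 2)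
      (fun _ _ => sq_nonneg _)
    have hA6 := Finset.sum_nonneg (s := Finset.univ)
      (f := fun rc : (Fin η × Fin m) × (Fin ε × Fin n) => ‖y (.inr (.inr (.inr rc)))‖ ^ 2)
      (fun _ _ => sq_nonneg _)
    rw [hsplit, hy, r1, r2, r3, r4, r5, r6]
    exact final_combine (ca + cb) _ _ _ _ _ _ _ _ _ _ _ _
      (by linarith) hA1 hA2 hA3 hA4 hA5 hA6 B1 B2 B3 B4


end S6

end


set_option maxHeartbeats 1000000 in
/-- Lemma 4.3. `‖ΔT‖₂ ≤ √3 ‖Δ_S(λ)‖₂`. -/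
theorem statement6 {𝕜 : Type*} [RCLike 𝕜] (m n ℓ ε η : ℕ)
    (hm : 0 < m) (hn : 0 < n) (hℓ : 0 < ℓ) (hε : 0 < ε) (hη : 0 < η)
    (Δ11a Δ11b : Matrix (Fin (η+1) × Fin m) (Fin (ε+1) × Fin n) 𝕜)
    (Δ12a Δ12b : Matrix (Fin (η+1) × Fin m) (Fin ℓ) 𝕜)
    (Δ13a Δ13b : Matrix (Fin (η+1) × Fin m) (Fin η × Fin m) 𝕜)
    (Δ21a Δ21b : Matrix (Fin ℓ) (Fin (ε+1) × Fin n) 𝕜)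
    (Δ22a Δ22b : Matrix (Fin ℓ) (Fin ℓ) 𝕜)
    (Δ23a Δ23b : Matrix (Fin ℓ) (Fin η × Fin m) 𝕜)
    (Δ31a Δ31b : Matrix (Fin ε × Fin n) (Fin (ε+1) × Fin n) 𝕜)
    (Δ32a Δ32b : Matrix (Fin ε × Fin n) (Fin ℓ) 𝕜)
    (Δ33a Δ33b : Matrix (Fin ε × Fin n) (Fin η × Fin m) 𝕜) :
    specNorm (DeltaT m n ℓ ε η Δ12a Δ12b Δ13a Δ13b Δ21a Δ21b Δ22a Δ22b Δ23a Δ23b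
        Δ31a Δ31b Δ32a Δ32b) ≤
      Real.sqrt 3 * pSpec
        (blocks3 Δ11a Δ12a Δ13a Δ21a Δ22a Δ23a Δ31a Δ32a Δ33a,
         blocks3 Δ11b Δ12b Δ13b Δ21b Δ22b Δ23b Δ31b Δ32b Δ33b) := by
  classical
  haveI : Nonempty (Fin m) := Fin.pos_iff_nonempty.mp hm
  haveI : Nonempty (Fin n) := Fin.pos_iff_nonempty.mp hn
  haveI : Nonempty (Fin ℓ) := Fin.pos_iff_nonempty.mp hℓ
  haveI : Nonempty (Fin ε) := Fin.pos_iff_nonempty.mp hε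
  haveI : Nonempty (Fin η) := Fin.pos_iff_nonempty.mp hη
  set Sa := blocks3 Δ11a Δ12a Δ13a Δ21a Δ22a Δ23a Δ31a Δ32a Δ33a with hSa
  set Sb := blocks3 Δ11b Δ12b Δ13b Δ21b Δ22b Δ23b Δ31b Δ32b Δ33b with hSb
  have hca : (0:ℝ) ≤ specNorm Sa ^ 2 := sq_nonneg _
  have hcb : (0:ℝ) ≤ specNorm Sb ^ 2 := sq_nonneg _
  have key : ∀ y : TRow m ℓ ε η n → 𝕜,
      S6.sqn ((DeltaT m n ℓ ε η Δ12a Δ12b Δ13a Δ13b Δ21a Δ21b Δ22a Δ22b Δ23a Δ23b Δ31a Δ31b Δ32a Δ32b)ᴴ *ᵥ y)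
        ≤ (3 * (specNorm Sa ^ 2 + specNorm Sb ^ 2)) * S6.sqn y :=
    S6.keyLemma Δ11a Δ11b Δ12a Δ12b Δ13a Δ13b Δ21a Δ21b Δ22a Δ22b Δ23a Δ23b
      Δ31a Δ31b Δ32a Δ32b Δ33a Δ33b (specNorm Sa ^ 2) (specNorm Sb ^ 2) hca hcb
      (S6.sqn_mulVec_le Sa) (S6.sqn_mulVec_le Sb)
      (S6.sqn_conjTranspose_mulVec_le Sa) (S6.sqn_conjTranspose_mulVec_le Sb)
  have hmain := S6.specNorm_le_sqrt_of_forall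
    (DeltaT m n ℓ ε η Δ12a Δ12b Δ13a Δ13b Δ21a Δ21b Δ22a Δ22b Δ23a Δ23b Δ31a Δ31b Δ32a Δ32b) (3 * (specNorm Sa ^ 2 + specNorm Sb ^ 2)) key
  refine hmain.trans (le_of_eq ?_)
  rw [Real.sqrt_mul (by norm_num : (0:ℝ) ≤ 3)]
  congr 1
end

section
/- Let m, n be positive integers, ε, η nonnegative integers, and d := ε+η+1. Let Λ_k(λ) denote the column vector (λ^k, …, λ², λ, 1)ᵀ of size k+1. (i) If M(λ) is an (η+1)m×(ε+1)n pencil and Q(λ) := (Λ_η(λ)⊗I_m)ᵀ · M(λ) · (Λ_ε(λ)⊗I_n) (a polynomial matrix of degree at most d), then ‖Q(λ)‖_F ≤ √(2·min(ε+1, η+1)) · ‖M(λ)‖_F. (ii) For every m×n polynomial matrix Q(λ) of degree at most d there exists an (η+1)m×(ε+1)n pencil M(λ) with Q(λ) = (Λ_η(λ)⊗I_m)ᵀ · M(λ) · (Λ_ε(λ)⊗I_n) and ‖M(λ)‖_F = ‖Q(λ)‖_F. (iii) Every pencil M(λ) satisfying Q(λ) = (Λ_η(λ)⊗I_m)ᵀ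 · M(λ) · (Λ_ε(λ)⊗I_n) satisfies ‖M(λ)‖_F ≥ ‖Q(λ)‖_F/√(2d). -/
open Matrix
open scoped Kronecker

noncomputable section
variable {𝕜 : Type*} [RCLike 𝕜] {m n ε η : ℕ}

def dg (ε η : ℕ) (p : Fin (η+1) × Fin (ε+1)) : ℕ := (η - (p.1:ℕ)) + (ε - (p.2:ℕ))

lemma lam_apply (Ma Mb : Matrix (Fin (η+1) × Fin m) (Fin (ε+1) × Fin n) 𝕜) (x : 𝕜)
    (a : Fin m) (b : Fin n) :
    ((LamI 𝕜 η m x)ᵀ * (Ma - x • Mb) * (LamI 𝕜 ε n x)) a b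
    = ∑ p : Fin (η+1) × Fin (ε+1),
       (Ma (p.1, a) (p.2, b) * x ^ dg ε η p - Mb (p.1, a) (p.2, b) * x ^ (dg ε η p + 1)) := by
  simp only [Matrix.mul_apply, Matrix.transpose_apply, Matrix.sub_apply, Matrix.smul_apply,
    LamI, Matrix.of_apply, smul_eq_mul, Fintype.sum_prod_type, ite_mul, mul_ite, zero_mul,
    mul_zero, Finset.sum_ite_eq, Finset.sum_ite_eq', Finset.mem_univ, if_true]
  simp only [Finset.sum_mul]
  rw [Finset.sum_comm]
  apply Finset.sum_congr rfl; intro i1 _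
  apply Finset.sum_congr rfl; intro j1 _
  simp only [dg, pow_add]
  ring

lemma coeff_unique {N : ℕ} (q q' : Fin N → 𝕜)
    (h : ∀ x : 𝕜, ∑ i : Fin N, x^(i:ℕ) * q i = ∑ i : Fin N, x^(i:ℕ) * q' i) : q = q' := by
  have hp : (∑ i : Fin N, Polynomial.C (q i) * Polynomial.X ^ (i:ℕ))
      = ∑ i : Fin N, Polynomial.C (q' i) * Polynomial.X ^ (i:ℕ) := by
    apply Polynomial.funext
    intro x
    simp only [Polynomial.eval_finset_sum, Polynomial.eval_mul, Polynomial.eval_C,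
      Polynomial.eval_pow, Polynomial.eval_X]
    simpa [mul_comm] using h x
  funext k
  have := congrArg (fun P => Polynomial.coeff P (k:ℕ)) hp
  simp only [Polynomial.finset_sum_coeff, Polynomial.coeff_C_mul, Polynomial.coeff_X_pow] at this
  rw [Finset.sum_eq_single k, Finset.sum_eq_single k] at this
  · simpa using this
  · intro i _ hne
    simp [Fin.val_ne_of_ne hne.symm]
  · simp
  · intro i _ hne
    simp [Fin.val_ne_of_ne hne.symm]
  · simp

def cM (Ma Mb : Matrix (Fin (η+1) × Fin m) (Fin (ε+1) × Fin n) 𝕜) (k : ℕ)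
    (a : Fin m) (b : Fin n) : 𝕜 :=
  ∑ p : Fin (η+1) × Fin (ε+1),
    ((if dg ε η p = k then Ma (p.1,a) (p.2,b) else 0)
      - (if dg ε η p + 1 = k then Mb (p.1,a) (p.2,b) else 0))

lemma dg_lt (p : Fin (η+1) × Fin (ε+1)) : dg ε η p + 1 < ε + η + 2 := by
  have h1 : η - (p.1:ℕ) ≤ η := Nat.sub_le _ _
  have h2 : ε - (p.2:ℕ) ≤ ε := Nat.sub_le _ _
  simp only [dg]; omega

lemma recon (Ma Mb : Matrix (Fin (η+1) × Fin m) (Fin (ε+1) × Fin n) 𝕜) (x : 𝕜)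
    (a : Fin m) (b : Fin n) :
    ∑ i : Fin (ε+η+2), x^(i:ℕ) * cM Ma Mb (i:ℕ) a b
    = ∑ p : Fin (η+1) × Fin (ε+1),
       (Ma (p.1, a) (p.2, b) * x ^ dg ε η p - Mb (p.1, a) (p.2, b) * x ^ (dg ε η p + 1)) := by
  simp only [cM, Finset.mul_sum, mul_sub]
  rw [Finset.sum_comm]
  apply Finset.sum_congr rfl; intro p _
  rw [Finset.sum_sub_distrib]
  congr 1
  · rw [Finset.sum_eq_single (⟨dg ε η p, by have := dg_lt (ε := ε) (η := η) p; omega⟩ :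
        Fin (ε+η+2))]
    · simp [mul_comm]
    · intro i _ hne
      rw [if_neg, mul_zero]
      intro hc
      exact hne (by ext; simp [← hc])
    · simp
  · rw [Finset.sum_eq_single (⟨dg ε η p + 1, dg_lt p⟩ : Fin (ε+η+2))]
    · simp [mul_comm]
    · intro i _ hne
      rw [if_neg, mul_zero]
      intro hc
      exact hne (by ext; simp [← hc])
    · simp

lemma main_coeff (Ma Mb : Matrix (Fin (η+1) × Fin m) (Fin (ε+1) × Fin n) 𝕜)
    (Q : Fin (ε + η + 2) → Matrix (Fin m) (Fin n) 𝕜)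
    (h : ∀ x : 𝕜, (LamI 𝕜 η m x)ᵀ * (Ma - x • Mb) * (LamI 𝕜 ε n x) = ∑ i, x ^ i.val • Q i)
    (k : Fin (ε + η + 2)) (a : Fin m) (b : Fin n) :
    Q k a b = cM Ma Mb (k:ℕ) a b := by
  have key : (fun i : Fin (ε+η+2) => Q i a b) = (fun i : Fin (ε+η+2) => cM Ma Mb (i:ℕ) a b) := by
    apply coeff_unique
    intro x
    have h1 := congrFun (congrFun (h x) a) b
    rw [lam_apply] at h1
    simp only [Matrix.sum_apply, Matrix.smul_apply, smul_eq_mul] at h1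
    rw [recon, ← h1]
  exact congrFun key k

lemma card_fiber_le (c k : ℕ) :
    (Finset.univ.filter (fun p : Fin (η+1) × Fin (ε+1) => dg ε η p + c = k)).card
      ≤ min (ε+1) (η+1) := by
  have key : ∀ p q : Fin (η+1) × Fin (ε+1), dg ε η p + c = k → dg ε η q + c = k →
      p.1 = q.1 → p = q := by
    intro p q hp hq h1
    have hp2 : (p.2:ℕ) ≤ ε := Fin.is_le _
    have hq2 : (q.2:ℕ) ≤ ε := Fin.is_le _
    have hp1 : (p.1:ℕ) ≤ η := Fin.is_le _
    have : (p.1:ℕ) = (q.1:ℕ) := congrArg Fin.val h1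
    simp only [dg] at hp hq
    have : (p.2:ℕ) = (q.2:ℕ) := by omega
    exact Prod.ext h1 (Fin.ext this)
  apply le_min
  · have := Finset.card_le_card_of_injOn
      (s := Finset.univ.filter (fun p : Fin (η+1) × Fin (ε+1) => dg ε η p + c = k))
      (t := (Finset.univ : Finset (Fin (ε+1))))
      (fun p : Fin (η+1) × Fin (ε+1) => p.2) (fun p _ => Finset.mem_univ p.2) ?_
    · simpa using this
    · intro p hp q hq h2
      simp only [Finset.mem_coe, Finset.mem_filter] at hp hq
      -- symmetric argument via second coordinate
      have hp1 : (p.1:ℕ) ≤ η := Fin.is_le _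
      have hq1 : (q.1:ℕ) ≤ η := Fin.is_le _
      have h2' : (p.2:ℕ) = (q.2:ℕ) := congrArg Fin.val h2
      simp only [dg] at hp hq
      have hp2 : (p.2:ℕ) ≤ ε := Fin.is_le _
      have : (p.1:ℕ) = (q.1:ℕ) := by omega
      exact Prod.ext (Fin.ext this) h2
  · have := Finset.card_le_card_of_injOn
      (s := Finset.univ.filter (fun p : Fin (η+1) × Fin (ε+1) => dg ε η p + c = k))
      (t := (Finset.univ : Finset (Fin (η+1))))
      (fun p : Fin (η+1) × Fin (ε+1) => p.1) (fun p _ => Finset.mem_univ p.1) ?_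
    · simpa using this
    · intro p hp q hq h1
      simp only [Finset.mem_coe, Finset.mem_filter] at hp hq
      exact key p q hp.2 hq.2 h1

lemma sq_cM_le (Ma Mb : Matrix (Fin (η+1) × Fin m) (Fin (ε+1) × Fin n) 𝕜) (k : ℕ)
    (a : Fin m) (b : Fin n) :
    ‖cM Ma Mb k a b‖^2 ≤ 2 * (min (ε+1) (η+1) : ℕ) *
      ((∑ p ∈ Finset.univ.filter (fun p : Fin (η+1) × Fin (ε+1) => dg ε η p + 0 = k),
          ‖Ma (p.1,a) (p.2,b)‖^2)
        + (∑ p ∈ Finset.univ.filter (fun p : Fin (η+1) × Fin (ε+1) => dg ε η p + 1 = k),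
          ‖Mb (p.1,a) (p.2,b)‖^2)) := by
  classical
  set fA := Finset.univ.filter (fun p : Fin (η+1) × Fin (ε+1) => dg ε η p + 0 = k) with hfA
  set fB := Finset.univ.filter (fun p : Fin (η+1) × Fin (ε+1) => dg ε η p + 1 = k) with hfB
  have hcm : cM Ma Mb k a b
      = (∑ p ∈ fA, Ma (p.1,a) (p.2,b)) - (∑ p ∈ fB, Mb (p.1,a) (p.2,b)) := by
    rw [cM, Finset.sum_sub_distrib, Finset.sum_filter, Finset.sum_filter]
    simp
  have hA : ‖∑ p ∈ fA, Ma (p.1,a) (p.2,b)‖^2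
      ≤ (min (ε+1) (η+1) : ℕ) * ∑ p ∈ fA, ‖Ma (p.1,a) (p.2,b)‖^2 := by
    calc ‖∑ p ∈ fA, Ma (p.1,a) (p.2,b)‖^2 ≤ (∑ p ∈ fA, ‖Ma (p.1,a) (p.2,b)‖)^2 := by
          have := norm_sum_le fA (fun p => Ma (p.1,a) (p.2,b))
          have h0 : (0:ℝ) ≤ ‖∑ p ∈ fA, Ma (p.1,a) (p.2,b)‖ := norm_nonneg _
          nlinarith
      _ ≤ fA.card * ∑ p ∈ fA, ‖Ma (p.1,a) (p.2,b)‖^2 := sq_sum_le_card_mul_sum_sq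
      _ ≤ (min (ε+1) (η+1) : ℕ) * ∑ p ∈ fA, ‖Ma (p.1,a) (p.2,b)‖^2 :=
          mul_le_mul_of_nonneg_right (Nat.cast_le.mpr (card_fiber_le 0 k))
            (Finset.sum_nonneg fun p _ => sq_nonneg _)
  have hB : ‖∑ p ∈ fB, Mb (p.1,a) (p.2,b)‖^2
      ≤ (min (ε+1) (η+1) : ℕ) * ∑ p ∈ fB, ‖Mb (p.1,a) (p.2,b)‖^2 := by
    calc ‖∑ p ∈ fB, Mb (p.1,a) (p.2,b)‖^2 ≤ (∑ p ∈ fB, ‖Mb (p.1,a) (p.2,b)‖)^2 := by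
          have := norm_sum_le fB (fun p => Mb (p.1,a) (p.2,b))
          have h0 : (0:ℝ) ≤ ‖∑ p ∈ fB, Mb (p.1,a) (p.2,b)‖ := norm_nonneg _
          nlinarith
      _ ≤ fB.card * ∑ p ∈ fB, ‖Mb (p.1,a) (p.2,b)‖^2 := sq_sum_le_card_mul_sum_sq
      _ ≤ (min (ε+1) (η+1) : ℕ) * ∑ p ∈ fB, ‖Mb (p.1,a) (p.2,b)‖^2 :=
          mul_le_mul_of_nonneg_right (Nat.cast_le.mpr (card_fiber_le 1 k))
            (Finset.sum_nonneg fun p _ => sq_nonneg _)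
  have hsub : ‖cM Ma Mb k a b‖
      ≤ ‖∑ p ∈ fA, Ma (p.1,a) (p.2,b)‖ + ‖∑ p ∈ fB, Mb (p.1,a) (p.2,b)‖ := by
    rw [hcm]; exact norm_sub_le _ _
  have h0 : (0:ℝ) ≤ ‖cM Ma Mb k a b‖ := norm_nonneg _
  have h1 : (0:ℝ) ≤ ‖∑ p ∈ fA, Ma (p.1,a) (p.2,b)‖ := norm_nonneg _
  have h2 : (0:ℝ) ≤ ‖∑ p ∈ fB, Mb (p.1,a) (p.2,b)‖ := norm_nonneg _
  nlinarith [pow_le_pow_left₀ h0 hsub 2,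
    sq_nonneg (‖∑ p ∈ fA, Ma (p.1,a) (p.2,b)‖ - ‖∑ p ∈ fB, Mb (p.1,a) (p.2,b)‖)]

lemma cover (w : Fin (η+1) × Fin (ε+1) → ℝ) (c : ℕ) (hc : c ≤ 1) :
    ∑ k : Fin (ε+η+2), ∑ p ∈ Finset.univ.filter
        (fun p : Fin (η+1) × Fin (ε+1) => dg ε η p + c = (k:ℕ)), w p
      = ∑ p : Fin (η+1) × Fin (ε+1), w p := by
  simp only [Finset.sum_filter]
  rw [Finset.sum_comm]
  apply Finset.sum_congr rfl; intro p _
  rw [Finset.sum_eq_single (⟨dg ε η p + c, by have := dg_lt (ε := ε) (η := η) p; omega⟩ :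
      Fin (ε+η+2))]
  · simp
  · intro i _ hne
    rw [if_neg]
    intro hcon
    exact hne (by ext; simp [← hcon])
  · simp

lemma triple_swap (g : Fin (η+1) × Fin (ε+1) → Fin m → Fin n → ℝ) :
    ∑ a : Fin m, ∑ b : Fin n, ∑ p : Fin (η+1) × Fin (ε+1), g p a b
    = ∑ i : Fin (η+1) × Fin m, ∑ j : Fin (ε+1) × Fin n, g (i.1, j.1) i.2 j.2 := by
  have l1 : ∑ a : Fin m, ∑ b : Fin n, ∑ p : Fin (η+1) × Fin (ε+1), g p a b
      = ∑ p : Fin (η+1) × Fin (ε+1), ∑ a : Fin m, ∑ b : Fin n, g p a b :=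
    calc ∑ a : Fin m, ∑ b : Fin n, ∑ p : Fin (η+1) × Fin (ε+1), g p a b
        = ∑ a : Fin m, ∑ p : Fin (η+1) × Fin (ε+1), ∑ b : Fin n, g p a b :=
          Finset.sum_congr rfl fun a _ => Finset.sum_comm
      _ = ∑ p : Fin (η+1) × Fin (ε+1), ∑ a : Fin m, ∑ b : Fin n, g p a b :=
          Finset.sum_comm
  rw [l1]
  simp only [Fintype.sum_prod_type]
  exact Finset.sum_congr rfl fun i1 _ => Finset.sum_comm

lemma frob_sq {p q : Type*} [Fintype p] [Fintype q] (M : Matrix p q 𝕜) :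
    frobNorm M ^ 2 = ∑ i, ∑ j, ‖M i j‖ ^ 2 := by
  rw [frobNorm, Real.sq_sqrt]
  exact Finset.sum_nonneg fun i _ => Finset.sum_nonneg fun j _ => sq_nonneg _

lemma part1 (Ma Mb : Matrix (Fin (η+1) × Fin m) (Fin (ε+1) × Fin n) 𝕜)
    (Q : Fin (ε + η + 2) → Matrix (Fin m) (Fin n) 𝕜)
    (h : ∀ x : 𝕜, (LamI 𝕜 η m x)ᵀ * (Ma - x • Mb) * (LamI 𝕜 ε n x) = ∑ i, x ^ i.val • Q i) :
    Real.sqrt (∑ i, frobNorm (Q i) ^ 2) ≤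
      Real.sqrt (2 * ((min (ε+1) (η+1) : ℕ) : ℝ)) * pFrob (Ma, Mb) := by
  have hS : ∑ i, frobNorm (Q i) ^ 2
      ≤ 2 * ((min (ε+1) (η+1) : ℕ) : ℝ) * (frobNorm Ma ^ 2 + frobNorm Mb ^ 2) := by
    calc ∑ i, frobNorm (Q i) ^ 2
        = ∑ k : Fin (ε+η+2), ∑ a, ∑ b, ‖cM Ma Mb (k:ℕ) a b‖^2 := by
          apply Finset.sum_congr rfl; intro k _
          rw [frob_sq]
          exact Finset.sum_congr rfl fun a _ => Finset.sum_congr rfl fun b _ => by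
            rw [main_coeff Ma Mb Q h k a b]
      _ ≤ ∑ k : Fin (ε+η+2), ∑ a, ∑ b, (2 * ((min (ε+1) (η+1) : ℕ) : ℝ) *
            ((∑ p ∈ Finset.univ.filter
                (fun p : Fin (η+1) × Fin (ε+1) => dg ε η p + 0 = (k:ℕ)),
              ‖Ma (p.1,a) (p.2,b)‖^2)
            + (∑ p ∈ Finset.univ.filter
                (fun p : Fin (η+1) × Fin (ε+1) => dg ε η p + 1 = (k:ℕ)),
              ‖Mb (p.1,a) (p.2,b)‖^2))) := by
          refine Finset.sum_le_sum fun k _ => Finset.sum_le_sum fun a _ =>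
            Finset.sum_le_sum fun b _ => sq_cM_le Ma Mb (k:ℕ) a b
      _ = 2 * ((min (ε+1) (η+1) : ℕ) : ℝ) * (frobNorm Ma ^ 2 + frobNorm Mb ^ 2) := by
          simp only [← Finset.mul_sum]
          congr 1
          have swap1 : ∀ (c : ℕ) (hc : c ≤ 1)
              (M : Matrix (Fin (η+1) × Fin m) (Fin (ε+1) × Fin n) 𝕜),
              ∑ k : Fin (ε+η+2), ∑ a, ∑ b, (∑ p ∈ Finset.univ.filter
                (fun p : Fin (η+1) × Fin (ε+1) => dg ε η p + c = (k:ℕ)),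
                ‖M (p.1,a) (p.2,b)‖^2) = frobNorm M ^ 2 := by
            intro c hc M
            have e1 : ∀ a b, ∑ k : Fin (ε+η+2), (∑ p ∈ Finset.univ.filter
                (fun p : Fin (η+1) × Fin (ε+1) => dg ε η p + c = (k:ℕ)),
                ‖M (p.1,a) (p.2,b)‖^2)
                = ∑ p : Fin (η+1) × Fin (ε+1), ‖M (p.1,a) (p.2,b)‖^2 :=
              fun a b => cover _ c hc
            calc ∑ k : Fin (ε+η+2), ∑ a, ∑ b, (∑ p ∈ Finset.univ.filter
                  (fun p : Fin (η+1) × Fin (ε+1) => dg ε η p + c = (k:ℕ)),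
                  ‖M (p.1,a) (p.2,b)‖^2)
                = ∑ a, ∑ b, ∑ k : Fin (ε+η+2), (∑ p ∈ Finset.univ.filter
                    (fun p : Fin (η+1) × Fin (ε+1) => dg ε η p + c = (k:ℕ)),
                    ‖M (p.1,a) (p.2,b)‖^2) := by
                  rw [Finset.sum_comm]
                  exact Finset.sum_congr rfl fun a _ => Finset.sum_comm
              _ = ∑ a, ∑ b, ∑ p : Fin (η+1) × Fin (ε+1), ‖M (p.1,a) (p.2,b)‖^2 :=
                  Finset.sum_congr rfl fun a _ => Finset.sum_congr rfl fun b _ => e1 a b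
              _ = frobNorm M ^ 2 := by
                  rw [frob_sq, triple_swap (g := fun p a b => ‖M (p.1,a) (p.2,b)‖^2)]
          simp only [Finset.sum_add_distrib]
          rw [swap1 0 (by norm_num) Ma, swap1 1 le_rfl Mb]
  have hfrob : pFrob (Ma, Mb) = Real.sqrt (frobNorm Ma ^ 2 + frobNorm Mb ^ 2) := rfl
  rw [hfrob, ← Real.sqrt_mul (by positivity)]
  exact Real.sqrt_le_sqrt hS

def MaC (Q : Fin (ε+η+2) → Matrix (Fin m) (Fin n) 𝕜) :
    Matrix (Fin (η+1) × Fin m) (Fin (ε+1) × Fin n) 𝕜 :=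
  Matrix.of fun i j =>
    if (j.1:ℕ) = ε then Q ⟨η - (i.1:ℕ), by omega⟩ i.2 j.2
    else if (i.1:ℕ) = 0 then Q ⟨η + (ε - (j.1:ℕ)), by omega⟩ i.2 j.2 else 0

def MbC (Q : Fin (ε+η+2) → Matrix (Fin m) (Fin n) 𝕜) :
    Matrix (Fin (η+1) × Fin m) (Fin (ε+1) × Fin n) 𝕜 :=
  Matrix.of fun i j =>
    if (i.1:ℕ) = 0 ∧ (j.1:ℕ) = 0 then -(Q ⟨ε+η+1, by omega⟩ i.2 j.2) else 0

lemma cM_construct (Q : Fin (ε+η+2) → Matrix (Fin m) (Fin n) 𝕜) (k : Fin (ε+η+2))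
    (a : Fin m) (b : Fin n) :
    cM (MaC Q) (MbC Q) (k:ℕ) a b = Q k a b := by
  have hk : (k:ℕ) < ε+η+2 := k.isLt
  rw [cM, Finset.sum_sub_distrib]
  have hB : ∑ p : Fin (η+1) × Fin (ε+1),
      (if dg ε η p + 1 = (k:ℕ) then MbC Q (p.1,a) (p.2,b) else 0)
      = if (k:ℕ) = ε+η+1 then -(Q k a b) else 0 := by
    by_cases hke : (k:ℕ) = ε+η+1
    · rw [if_pos hke]
      rw [Finset.sum_eq_single ((0 : Fin (η+1)), (0 : Fin (ε+1)))]
      · rw [if_pos (by simp [dg]; omega)]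
        have hkk : k = (⟨ε+η+1, by omega⟩ : Fin (ε+η+2)) := Fin.ext hke
        simp [MbC, hkk]
      · intro p _ hne
        by_cases hdg : dg ε η p + 1 = (k:ℕ)
        · rw [if_pos hdg]
          simp only [MbC, Matrix.of_apply]
          rw [if_neg]
          intro ⟨h1, h2⟩
          exact hne (by ext <;> simp [h1, h2])
        · rw [if_neg hdg]
      · simp
    · rw [if_neg hke]
      apply Finset.sum_eq_zero
      intro p _
      by_cases hdg : dg ε η p + 1 = (k:ℕ)
      · rw [if_pos hdg]
        simp only [MbC, Matrix.of_apply]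
        rw [if_neg]
        intro ⟨h1, h2⟩
        simp only [dg, h1, h2] at hdg
        omega
      · rw [if_neg hdg]
  have hA : ∑ p : Fin (η+1) × Fin (ε+1),
      (if dg ε η p = (k:ℕ) then MaC Q (p.1,a) (p.2,b) else 0)
      = if (k:ℕ) = ε+η+1 then 0 else Q k a b := by
    by_cases hke : (k:ℕ) = ε+η+1
    · rw [if_pos hke]
      apply Finset.sum_eq_zero
      intro p _
      rw [if_neg]
      have h1 : (p.1:ℕ) ≤ η := Fin.is_le _
      have h2 : (p.2:ℕ) ≤ ε := Fin.is_le _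
      simp only [dg]; omega
    · rw [if_neg hke]
      by_cases hkle : (k:ℕ) ≤ η
      · rw [Finset.sum_eq_single ((⟨η - (k:ℕ), by omega⟩ : Fin (η+1)),
            (⟨ε, by omega⟩ : Fin (ε+1)))]
        · rw [if_pos (by simp [dg]; omega)]
          simp only [MaC, Matrix.of_apply]
          rw [if_pos (by simp)]
          congr 1
          ext
          simp; omega
        · intro p _ hne
          by_cases hdg : dg ε η p = (k:ℕ)
          · rw [if_pos hdg]
            have h1 : (p.1:ℕ) ≤ η := Fin.is_le _
            have h2 : (p.2:ℕ) ≤ ε := Fin.is_le _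
            simp only [MaC, Matrix.of_apply]
            by_cases hc1 : (p.2.1:ℕ) = ε
            · exfalso
              apply hne
              simp only [dg, hc1] at hdg
              ext <;> simp [hc1] <;> omega
            · rw [if_neg hc1]
              rw [if_neg]
              intro hc2
              simp only [dg, hc2] at hdg
              omega
          · rw [if_neg hdg]
        · simp
      · -- η < k ≤ ε + η
        have hkle2 : (k:ℕ) ≤ ε + η := by omega
        rw [Finset.sum_eq_single ((⟨0, by omega⟩ : Fin (η+1)),
            (⟨ε - ((k:ℕ) - η), by omega⟩ : Fin (ε+1)))]
        · rw [if_pos (by simp [dg]; omega)]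
          simp only [MaC, Matrix.of_apply]
          have hc1 : ¬ ((((⟨0, by omega⟩ : Fin (η+1)), (⟨ε - ((k:ℕ) - η), by omega⟩ : Fin (ε+1))).2 : Fin (ε+1)) : ℕ) = ε := by
            simp only [Fin.val_mk]
            omega
          rw [if_neg hc1, if_pos (by simp)]
          congr 1
          ext
          simp; omega
        · intro p _ hne
          by_cases hdg : dg ε η p = (k:ℕ)
          · rw [if_pos hdg]
            have h1 : (p.1:ℕ) ≤ η := Fin.is_le _
            have h2 : (p.2:ℕ) ≤ ε := Fin.is_le _
            simp only [MaC, Matrix.of_apply]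
            by_cases hc1 : (p.2.1:ℕ) = ε
            · exfalso
              simp only [dg, hc1] at hdg
              omega
            · rw [if_neg hc1]
              rw [if_neg]
              intro hc2
              apply hne
              simp only [dg, hc2] at hdg
              ext <;> simp [hc2] <;> omega
          · rw [if_neg hdg]
        · simp
  rw [hA, hB]
  by_cases hke : (k:ℕ) = ε+η+1 <;> simp [hke]

lemma norm_construct (Q : Fin (ε+η+2) → Matrix (Fin m) (Fin n) 𝕜) :
    frobNorm (MaC Q) ^ 2 + frobNorm (MbC Q) ^ 2 = ∑ i, frobNorm (Q i) ^ 2 := by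
  have tsA := triple_swap (g := fun (p : Fin (η+1) × Fin (ε+1)) (a : Fin m) (b : Fin n) =>
    ‖MaC Q (p.1,a) (p.2,b)‖^2)
  have tsB := triple_swap (g := fun (p : Fin (η+1) × Fin (ε+1)) (a : Fin m) (b : Fin n) =>
    ‖MbC Q (p.1,a) (p.2,b)‖^2)
  simp only at tsA tsB
  rw [frob_sq, frob_sq, ← tsA, ← tsB]
  have hQ : ∑ i, frobNorm (Q i) ^ 2 = ∑ a, ∑ b, ∑ i, ‖Q i a b‖^2 := by
    have : ∑ i, frobNorm (Q i) ^ 2 = ∑ i, ∑ a, ∑ b, ‖Q i a b‖^2 :=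
      Finset.sum_congr rfl fun i _ => frob_sq _
    rw [this]
    calc ∑ i : Fin (ε+η+2), ∑ a, ∑ b, ‖Q i a b‖^2
        = ∑ a, ∑ i : Fin (ε+η+2), ∑ b, ‖Q i a b‖^2 := Finset.sum_comm
      _ = ∑ a, ∑ b, ∑ i : Fin (ε+η+2), ‖Q i a b‖^2 :=
          Finset.sum_congr rfl fun a _ => Finset.sum_comm
  rw [hQ, ← Finset.sum_add_distrib]
  apply Finset.sum_congr rfl; intro a _
  rw [← Finset.sum_add_distrib]
  apply Finset.sum_congr rfl; intro b _
  set q : ℕ → ℝ := fun k => if h : k < ε+η+2 then ‖Q ⟨k,h⟩ a b‖^2 else 0 with hq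
  have hqv : ∀ i : Fin (ε+η+2), ‖Q i a b‖^2 = q (i:ℕ) := by
    intro i
    rw [hq]
    simp only [i.isLt, dif_pos]
  have hqv' : ∀ (k : ℕ) (h : k < ε+η+2), q k = ‖Q ⟨k,h⟩ a b‖^2 := by
    intro k h
    rw [hq]
    exact dif_pos h
  have hA : ∑ p : Fin (η+1) × Fin (ε+1), ‖MaC Q (p.1,a) (p.2,b)‖^2
      = ∑ k ∈ Finset.range (η+1+ε), q k := by
    rw [Fintype.sum_prod_type, Finset.sum_comm, Finset.sum_range_add (fun k => q k) (η+1) ε]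
    rw [Fin.sum_univ_castSucc]
    have hlast : ∑ x : Fin (η+1), ‖MaC Q (x,a) (Fin.last ε, b)‖^2
        = ∑ k ∈ Finset.range (η+1), q k := by
      have hv : ∀ x : Fin (η+1), ‖MaC Q (x,a) (Fin.last ε, b)‖^2 = q (η - (x:ℕ)) := by
        intro x
        simp only [MaC, Matrix.of_apply, Fin.val_last, if_pos rfl]
        rw [hqv' (η - (x:ℕ)) (by omega)]
        simp
      simp only [hv]
      rw [Fin.sum_univ_eq_sum_range (fun i => q (η - i)) (η+1)]
      have := Finset.sum_range_reflect q (η+1)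
      simpa using this
    have hcs : ∀ y : Fin ε, ∑ x : Fin (η+1), ‖MaC Q (x,a) (y.castSucc, b)‖^2
        = q (η+(ε-(y:ℕ))) := by
      intro y
      have hy : (y:ℕ) < ε := y.isLt
      have hyε : (((y.castSucc : Fin (ε+1)), b).1 : Fin (ε+1)).1 ≠ ε := by
        simp only [Fin.coe_castSucc]; omega
      rw [Finset.sum_eq_single (0 : Fin (η+1))]
      · simp only [MaC, Matrix.of_apply, if_neg hyε]
        rw [if_pos (by simp), hqv' (η+(ε-(y:ℕ))) (by omega)]
        simp only [Fin.coe_castSucc]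
      · intro x _ hne
        simp only [MaC, Matrix.of_apply, if_neg hyε]
        rw [if_neg]
        · simp
        · intro h; apply hne; ext; simpa using h
      · simp
    rw [hlast]
    simp only [hcs]
    rw [add_comm]
    congr 1
    rw [Fin.sum_univ_eq_sum_range (fun j => q (η+(ε-j))) ε]
    rw [← Finset.sum_range_reflect (fun j => q (η+1+j)) ε]
    apply Finset.sum_congr rfl
    intro j hj
    rw [Finset.mem_range] at hj
    exact congrArg q (by omega)
  have hB : ∑ p : Fin (η+1) × Fin (ε+1), ‖MbC Q (p.1,a) (p.2,b)‖^2 = q (ε+η+1) := by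
    rw [Finset.sum_eq_single ((0 : Fin (η+1)), (0 : Fin (ε+1)))]
    · simp only [MbC, Matrix.of_apply]
      rw [if_pos (by simp), hqv' (ε+η+1) (by omega)]
      simp
    · intro p _ hne
      simp only [MbC, Matrix.of_apply]
      rw [if_neg]
      · simp
      · intro ⟨h1, h2⟩
        exact hne (by ext <;> simp [h1, h2])
    · simp
  rw [hA, hB]
  simp only [hqv]
  rw [Fin.sum_univ_eq_sum_range (fun i => q i) (ε+η+2),
    show ε+η+2 = (η+1+ε)+1 by omega, Finset.sum_range_succ]
  rw [add_comm (ε+η+1) 0, zero_add, show ε+η+1 = η+1+ε by omega]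

lemma construct_eq (Q : Fin (ε+η+2) → Matrix (Fin m) (Fin n) 𝕜) (x : 𝕜) :
    (LamI 𝕜 η m x)ᵀ * (MaC Q - x • MbC Q) * (LamI 𝕜 ε n x) = ∑ i, x ^ i.val • Q i := by
  ext a b
  rw [lam_apply, ← recon]
  simp only [Matrix.sum_apply, Matrix.smul_apply, smul_eq_mul]
  exact Finset.sum_congr rfl fun i _ => by rw [cM_construct]

end

/-- Lemma 4.11. Relations between the norms of a polynomial matrix
`Q(λ) = (Λ_η(λ)⊗I_m)ᵀ M(λ) (Λ_ε(λ)⊗I_n)` and of the pencil `M(λ)`. -/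
theorem statement13 {𝕜 : Type*} [RCLike 𝕜] (m n ε η : ℕ) (hm : 0 < m) (hn : 0 < n) :
    (∀ (Ma Mb : Matrix (Fin (η+1) × Fin m) (Fin (ε+1) × Fin n) 𝕜)
        (Q : Fin (ε + η + 2) → Matrix (Fin m) (Fin n) 𝕜),
        (∀ x : 𝕜, (LamI 𝕜 η m x)ᵀ * (Ma - x • Mb) * (LamI 𝕜 ε n x) =
          ∑ i, x ^ i.val • Q i) →
        Real.sqrt (∑ i, frobNorm (Q i) ^ 2) ≤
          Real.sqrt (2 * (min (ε + 1) (η + 1) : ℝ)) * pFrob (Ma, Mb)) ∧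
    (∀ Q : Fin (ε + η + 2) → Matrix (Fin m) (Fin n) 𝕜,
        ∃ Ma Mb : Matrix (Fin (η+1) × Fin m) (Fin (ε+1) × Fin n) 𝕜,
          (∀ x : 𝕜, (LamI 𝕜 η m x)ᵀ * (Ma - x • Mb) * (LamI 𝕜 ε n x) =
            ∑ i, x ^ i.val • Q i) ∧
          pFrob (Ma, Mb) = Real.sqrt (∑ i, frobNorm (Q i) ^ 2)) ∧
    (∀ (Ma Mb : Matrix (Fin (η+1) × Fin m) (Fin (ε+1) × Fin n) 𝕜)
        (Q : Fin (ε + η + 2) → Matrix (Fin m) (Fin n) 𝕜),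
        (∀ x : 𝕜, (LamI 𝕜 η m x)ᵀ * (Ma - x • Mb) * (LamI 𝕜 ε n x) =
          ∑ i, x ^ i.val • Q i) →
        Real.sqrt (∑ i, frobNorm (Q i) ^ 2) / Real.sqrt (2 * ((ε : ℝ) + (η : ℝ) + 1)) ≤
          pFrob (Ma, Mb)) := by
  have hmin : (min (ε + 1) (η + 1) : ℝ) = ((min (ε+1) (η+1) : ℕ) : ℝ) := by
    push_cast [Nat.cast_min]
    norm_num
  refine ⟨?_, ?_, ?_⟩
  · intro Ma Mb Q h
    rw [hmin]
    exact part1 Ma Mb Q h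
  · intro Q
    refine ⟨MaC Q, MbC Q, construct_eq Q, ?_⟩
    rw [pFrob]
    simp only
    rw [norm_construct]
  · intro Ma Mb Q h
    have h1 := part1 Ma Mb Q h
    have h2 : Real.sqrt (2 * ((min (ε+1) (η+1) : ℕ) : ℝ)) * pFrob (Ma, Mb)
        ≤ Real.sqrt (2 * ((ε : ℝ) + (η : ℝ) + 1)) * pFrob (Ma, Mb) := by
      apply mul_le_mul_of_nonneg_right _ (Real.sqrt_nonneg _)
      apply Real.sqrt_le_sqrt
      have : ((min (ε+1) (η+1) : ℕ) : ℝ) ≤ (ε : ℝ) + (η : ℝ) + 1 := by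
        have : min (ε+1) (η+1) ≤ ε + η + 1 := le_trans (min_le_left _ _) (by omega)
        exact_mod_cast le_trans (Nat.cast_le.mpr this) (by push_cast; norm_num)
      linarith
    have hpos : 0 < Real.sqrt (2 * ((ε : ℝ) + (η : ℝ) + 1)) := by
      apply Real.sqrt_pos.mpr
      positivity
    rw [div_le_iff₀ hpos]
    calc Real.sqrt (∑ i, frobNorm (Q i) ^ 2)
        ≤ Real.sqrt (2 * ((min (ε+1) (η+1) : ℕ) : ℝ)) * pFrob (Ma, Mb) := h1
      _ ≤ Real.sqrt (2 * ((ε : ℝ) + (η : ℝ) + 1)) * pFrob (Ma, Mb) := h2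
      _ = pFrob (Ma, Mb) * Real.sqrt (2 * ((ε : ℝ) + (η : ℝ) + 1)) := mul_comm _ _
end

section
/- Let m, n, ℓ be positive integers, ε, η nonnegative integers with max(ε,η) > 0, and let S(λ) be the block Kronecker pencil built from A ∈ F^{ℓ×ℓ}, B ∈ F^{ℓ×n}, C ∈ F^{m×ℓ} and the (η+1)m×(ε+1)n pencil M(λ) as in the context. Then max(1, ‖A‖₂, ‖B‖₂, ‖C‖₂, ‖M(λ)‖₂) ≤ ‖S(λ)‖₂ and ‖S(λ)‖₂ ≤ √2 + ‖[[M(λ), K̂₂ᵀC],[BK̂₁, A]]‖₂ ≤ √2 + (‖A‖_F² + ‖B‖_F² + ‖C‖_F² + ‖M(λ)‖_F²)^{1/2}, where [[M(λ), K̂₂ᵀC],[BK̂₁, A]] denotes the 2×2 block pencil whose constant term contains A and whose λ-coefficient is that of M(λ) in the (1,1) block and zero elsewhere. -/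
open Matrix
open scoped Kronecker

noncomputable section Aux
namespace Stmt17Aux
open Matrix Finset
variable {𝕜 : Type*} [RCLike 𝕜]

/-- squared euclidean norm of a vector -/
def sqv {q : Type*} [Fintype q] (x : q → 𝕜) : ℝ := ∑ i, ‖x i‖ ^ 2

lemma sqv_nonneg {q : Type*} [Fintype q] (x : q → 𝕜) : 0 ≤ sqv x :=
  Finset.sum_nonneg fun _ _ => by positivity

/-- the vector as an element of Euclidean space -/
def ee {q : Type*} [Fintype q] (x : q → 𝕜) : EuclideanSpace 𝕜 q := (WithLp.equiv 2 _).symm x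

lemma norm_ee {q : Type*} [Fintype q] (x : q → 𝕜) : ‖ee x‖ = Real.sqrt (sqv x) :=
  EuclideanSpace.norm_eq _

lemma sqv_eq_norm_sq {q : Type*} [Fintype q] (x : q → 𝕜) : sqv x = ‖ee x‖ ^ 2 := by
  rw [norm_ee, Real.sq_sqrt (sqv_nonneg x)]

lemma inner_ee {q : Type*} [Fintype q] (u v : q → 𝕜) :
    (inner 𝕜 (ee u) (ee v) : 𝕜) = star u ⬝ᵥ v :=
  by rw [dotProduct_comm]; rfl

lemma re_star_dot_self {q : Type*} [Fintype q] (z : q → 𝕜) :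
    RCLike.re (star z ⬝ᵥ z) = sqv z := by
  simp only [dotProduct, Pi.star_apply, RCLike.star_def, map_sum, sqv]
  refine Finset.sum_congr rfl fun i _ => ?_
  rw [RCLike.conj_mul]
  norm_cast

end Stmt17Aux
end Aux
noncomputable section Aux2
namespace Stmt17Aux
open Matrix Finset
variable {𝕜 : Type*} [RCLike 𝕜]
variable {P Q : Type*} [Fintype P] [Fintype Q] [DecidableEq P]

lemma re_dot_eq (M : Matrix P Q 𝕜) (x : P → 𝕜) :
    RCLike.re (star x ⬝ᵥ ((M * Mᴴ) *ᵥ x)) = sqv (Mᴴ *ᵥ x) := by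
  rw [← Matrix.mulVec_mulVec, Matrix.dotProduct_mulVec, ← re_star_dot_self]
  congr 1
  rw [Matrix.star_mulVec, Matrix.conjTranspose_conjTranspose]

lemma sqv_eigbasis (M : Matrix P Q 𝕜) (i : P) :
    sqv ⇑((Matrix.isHermitian_mul_conjTranspose_self M).eigenvectorBasis i) = 1 := by
  have h := (Matrix.isHermitian_mul_conjTranspose_self M).eigenvectorBasis.orthonormal.1 i
  rw [sqv_eq_norm_sq, show ee ⇑((Matrix.isHermitian_mul_conjTranspose_self M).eigenvectorBasis i)
      = (Matrix.isHermitian_mul_conjTranspose_self M).eigenvectorBasis i from rfl, h]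
  norm_num

lemma eig_eq (M : Matrix P Q 𝕜) (i : P) :
    (Matrix.isHermitian_mul_conjTranspose_self M).eigenvalues i
      = sqv (Mᴴ *ᵥ ⇑((Matrix.isHermitian_mul_conjTranspose_self M).eigenvectorBasis i)) := by
  rw [← re_dot_eq, (Matrix.isHermitian_mul_conjTranspose_self M).mulVec_eigenvectorBasis,
    dotProduct_smul, RCLike.smul_re, re_star_dot_self, sqv_eigbasis, mul_one]

lemma iSup_eig_nonneg (M : Matrix P Q 𝕜) :
    0 ≤ ⨆ i, (Matrix.isHermitian_mul_conjTranspose_self M).eigenvalues i := by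
  rcases isEmpty_or_nonempty P with h|h
  · simp [Real.iSup_of_isEmpty]
  · obtain ⟨i⟩ := h
    refine le_trans ?_ (le_ciSup (Set.Finite.bddAbove (Set.finite_range _)) i)
    rw [eig_eq]; exact sqv_nonneg _

lemma spec_sq (M : Matrix P Q 𝕜) :
    specNorm M ^ 2 = ⨆ i, (Matrix.isHermitian_mul_conjTranspose_self M).eigenvalues i :=
  Real.sq_sqrt (iSup_eig_nonneg M)

lemma specNorm_nonneg (M : Matrix P Q 𝕜) : 0 ≤ specNorm M := Real.sqrt_nonneg _

lemma quad_le (M : Matrix P Q 𝕜) (x : P → 𝕜) :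
    sqv (Mᴴ *ᵥ x)
      ≤ (⨆ i, (Matrix.isHermitian_mul_conjTranspose_self M).eigenvalues i) * sqv x := by
  set hH := Matrix.isHermitian_mul_conjTranspose_self M with hdef
  set b := hH.eigenvectorBasis with hb
  have hterm : ∀ i : P, (inner 𝕜 (b i) (ee ((M * Mᴴ) *ᵥ x)) : 𝕜)
      = hH.eigenvalues i • (inner 𝕜 (b i) (ee x) : 𝕜) := by
    intro i
    show (inner 𝕜 (ee ⇑(b i)) (ee ((M * Mᴴ) *ᵥ x)) : 𝕜)
      = hH.eigenvalues i • (inner 𝕜 (ee ⇑(b i)) (ee x) : 𝕜)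
    rw [inner_ee, inner_ee, Matrix.dotProduct_mulVec]
    have h2 : star ⇑(b i) ᵥ* (M * Mᴴ) = star ((M * Mᴴ) *ᵥ ⇑(b i)) := by
      rw [Matrix.star_mulVec, hH.eq]
    rw [h2, hH.mulVec_eigenvectorBasis, RCLike.real_smul_eq_coe_smul (K := 𝕜), star_smul,
      RCLike.star_def, RCLike.conj_ofReal, smul_dotProduct,
      RCLike.real_smul_eq_coe_smul (K := 𝕜) (hH.eigenvalues i)]
  have hre : ∀ i : P, RCLike.re ((inner 𝕜 (ee x) (b i) : 𝕜) * (inner 𝕜 (b i) (ee x) : 𝕜))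
      = ‖(inner 𝕜 (b i) (ee x) : 𝕜)‖ ^ 2 := by
    intro i
    rw [← inner_conj_symm, RCLike.conj_mul]; norm_cast
  have hmain := congrArg RCLike.re (b.sum_inner_mul_inner (ee x) (ee ((M * Mᴴ) *ᵥ x)))
  have hpars := congrArg RCLike.re (b.sum_inner_mul_inner (ee x) (ee x))
  rw [map_sum] at hmain hpars
  rw [show (inner 𝕜 (ee x) (ee ((M * Mᴴ) *ᵥ x)) : 𝕜) = star x ⬝ᵥ ((M * Mᴴ) *ᵥ x) from inner_ee _ _,
    re_dot_eq] at hmain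
  rw [show (inner 𝕜 (ee x) (ee x) : 𝕜) = star x ⬝ᵥ x from inner_ee _ _, re_star_dot_self] at hpars
  have hmain2 : ∑ i : P, hH.eigenvalues i * ‖(inner 𝕜 (b i) (ee x) : 𝕜)‖ ^ 2 = sqv (Mᴴ *ᵥ x) := by
    rw [← hmain]
    refine Finset.sum_congr rfl fun i _ => ?_
    rw [hterm i, mul_smul_comm, RCLike.smul_re, hre i]
  have hpars2 : ∑ i : P, ‖(inner 𝕜 (b i) (ee x) : 𝕜)‖ ^ 2 = sqv x := by
    rw [← hpars]
    refine Finset.sum_congr rfl fun i _ => ?_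
    exact (hre i).symm
  calc sqv (Mᴴ *ᵥ x) = ∑ i : P, hH.eigenvalues i * ‖(inner 𝕜 (b i) (ee x) : 𝕜)‖ ^ 2 := hmain2.symm
    _ ≤ ∑ i : P, (⨆ j, hH.eigenvalues j) * ‖(inner 𝕜 (b i) (ee x) : 𝕜)‖ ^ 2 := by
        refine Finset.sum_le_sum fun i _ => ?_
        exact mul_le_mul_of_nonneg_right
          (le_ciSup (Set.Finite.bddAbove (Set.finite_range _)) i) (by positivity)
    _ = (⨆ j, hH.eigenvalues j) * sqv x := by rw [← Finset.mul_sum, hpars2]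

end Stmt17Aux
end Aux2
noncomputable section Aux3
namespace Stmt17Aux
open Matrix Finset
variable {𝕜 : Type*} [RCLike 𝕜]
variable {P Q : Type*} [Fintype P] [Fintype Q] [DecidableEq P]

set_option linter.unusedSectionVars false

lemma sqv_mulVec_le (M : Matrix P Q 𝕜) (x : P → 𝕜) :
    sqv (Mᴴ *ᵥ x) ≤ specNorm M ^ 2 * sqv x := by
  rw [spec_sq]; exact quad_le M x

lemma en_mulVec_le (M : Matrix P Q 𝕜) (x : P → 𝕜) :
    Real.sqrt (sqv (Mᴴ *ᵥ x)) ≤ specNorm M * Real.sqrt (sqv x) := by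
  have := Real.sqrt_le_sqrt (sqv_mulVec_le M x)
  rwa [Real.sqrt_mul (sq_nonneg _), Real.sqrt_sq (specNorm_nonneg M)] at this

lemma specNorm_le {c : ℝ} (M : Matrix P Q 𝕜) (hc : 0 ≤ c)
    (h : ∀ x : P → 𝕜, sqv (Mᴴ *ᵥ x) ≤ c ^ 2 * sqv x) : specNorm M ≤ c := by
  have hsup : (⨆ i, (Matrix.isHermitian_mul_conjTranspose_self M).eigenvalues i) ≤ c ^ 2 := by
    rcases isEmpty_or_nonempty P with hP|hP
    · simp [Real.iSup_of_isEmpty]; positivity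
    · refine ciSup_le fun i => ?_
      rw [eig_eq]
      calc sqv (Mᴴ *ᵥ ⇑((Matrix.isHermitian_mul_conjTranspose_self M).eigenvectorBasis i))
          ≤ c ^ 2 * sqv ⇑((Matrix.isHermitian_mul_conjTranspose_self M).eigenvectorBasis i) :=
            h _
        _ = c ^ 2 := by rw [sqv_eigbasis, mul_one]
  calc specNorm M = Real.sqrt (⨆ i, (Matrix.isHermitian_mul_conjTranspose_self M).eigenvalues i) :=
        rfl
    _ ≤ Real.sqrt (c ^ 2) := Real.sqrt_le_sqrt hsup
    _ = c := Real.sqrt_sq hc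

lemma le_specNorm {c : ℝ} (M : Matrix P Q 𝕜) (hc : 0 ≤ c) (x : P → 𝕜) (hx : sqv x = 1)
    (h : c ^ 2 ≤ sqv (Mᴴ *ᵥ x)) : c ≤ specNorm M := by
  have h2 : c ^ 2 ≤ specNorm M ^ 2 := by
    calc c ^ 2 ≤ sqv (Mᴴ *ᵥ x) := h
      _ ≤ specNorm M ^ 2 * sqv x := sqv_mulVec_le M x
      _ = specNorm M ^ 2 := by rw [hx, mul_one]
  calc c = Real.sqrt (c ^ 2) := (Real.sqrt_sq hc).symm
    _ ≤ Real.sqrt (specNorm M ^ 2) := Real.sqrt_le_sqrt h2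
    _ = specNorm M := Real.sqrt_sq (specNorm_nonneg M)

lemma specNorm_one_le : specNorm (1 : Matrix P P 𝕜) ≤ 1 := by
  refine specNorm_le _ zero_le_one fun x => ?_
  rw [Matrix.conjTranspose_one, Matrix.one_mulVec, one_pow, one_mul]

lemma specNorm_zero_le : specNorm (0 : Matrix P Q 𝕜) ≤ 1 := by
  refine specNorm_le _ zero_le_one fun x => ?_
  rw [Matrix.conjTranspose_zero, Matrix.zero_mulVec]
  have : sqv (0 : Q → 𝕜) = 0 := by simp [sqv]
  rw [this]
  simpa using sqv_nonneg x

lemma specNorm_add_le (X Y : Matrix P Q 𝕜) :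
    specNorm (X + Y) ≤ specNorm X + specNorm Y := by
  refine specNorm_le _ (add_nonneg (specNorm_nonneg X) (specNorm_nonneg Y)) fun x => ?_
  have h0 : (X + Y)ᴴ *ᵥ x = Xᴴ *ᵥ x + Yᴴ *ᵥ x := by
    rw [Matrix.conjTranspose_add, Matrix.add_mulVec]
  have h1 : Real.sqrt (sqv ((X + Y)ᴴ *ᵥ x))
      ≤ (specNorm X + specNorm Y) * Real.sqrt (sqv x) := by
    rw [h0, ← norm_ee, show ee (Xᴴ *ᵥ x + Yᴴ *ᵥ x) = ee (Xᴴ *ᵥ x) + ee (Yᴴ *ᵥ x) from rfl]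
    calc ‖ee (Xᴴ *ᵥ x) + ee (Yᴴ *ᵥ x)‖ ≤ ‖ee (Xᴴ *ᵥ x)‖ + ‖ee (Yᴴ *ᵥ x)‖ := norm_add_le _ _
      _ ≤ specNorm X * Real.sqrt (sqv x) + specNorm Y * Real.sqrt (sqv x) := by
          rw [norm_ee, norm_ee]; exact add_le_add (en_mulVec_le X x) (en_mulVec_le Y x)
      _ = (specNorm X + specNorm Y) * Real.sqrt (sqv x) := by ring
  have h2 := mul_self_le_mul_self (Real.sqrt_nonneg _) h1
  rw [Real.mul_self_sqrt (sqv_nonneg _)] at h2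
  calc sqv ((X + Y)ᴴ *ᵥ x)
      ≤ (specNorm X + specNorm Y) * Real.sqrt (sqv x)
        * ((specNorm X + specNorm Y) * Real.sqrt (sqv x)) := h2
    _ = (specNorm X + specNorm Y) ^ 2 * (Real.sqrt (sqv x) * Real.sqrt (sqv x)) := by ring
    _ = (specNorm X + specNorm Y) ^ 2 * sqv x := by rw [Real.mul_self_sqrt (sqv_nonneg _)]

end Stmt17Aux
end Aux3
noncomputable section Aux4
namespace Stmt17Aux
open Matrix Finset
variable {𝕜 : Type*} [RCLike 𝕜]
variable {P Q p q : Type*} [Fintype P] [Fintype Q] [DecidableEq P] [DecidableEq Q]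
  [Fintype p] [Fintype q] [DecidableEq p] [DecidableEq q]

set_option linter.unusedSectionVars false

lemma sum_comp_inj_le {r : p → P} (hr : Function.Injective r) (f : P → ℝ)
    (hf : ∀ I, 0 ≤ f I) : ∑ i, f (r i) ≤ ∑ I, f I := by
  rw [← Finset.sum_image (fun a _ b _ h => hr h)]
  exact Finset.sum_le_sum_of_subset_of_nonneg (Finset.subset_univ _) fun I _ _ => hf I

lemma sum_ext_eq {β : Type*} [AddCommMonoid β] {r : p → P} (hr : Function.Injective r) (f : P → β)
    (hf : ∀ I, (¬ ∃ i, r i = I) → f I = 0) : ∑ I, f I = ∑ i, f (r i) := by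
  rw [← Finset.sum_image (fun a _ b _ h => hr h)]
  refine (Finset.sum_subset (Finset.subset_univ _) fun I _ hI => ?_).symm
  refine hf I fun ⟨i, hi⟩ => hI ?_
  exact Finset.mem_image.2 ⟨i, Finset.mem_univ i, hi⟩

lemma sqv_extend {r : p → P} (hr : Function.Injective r) (x : p → 𝕜) :
    sqv (Function.extend r x 0) = sqv x := by
  rw [sqv, sum_ext_eq hr _ (fun I hI => by rw [Function.extend_apply' _ _ _ hI]; simp)]
  refine Finset.sum_congr rfl fun i _ => ?_
  rw [hr.extend_apply]

lemma specNorm_submatrix_le (big : Matrix P Q 𝕜) (small : Matrix p q 𝕜)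
    (r : p → P) (c : q → Q) (hr : Function.Injective r) (hc : Function.Injective c)
    (hgrid : ∀ i j, big (r i) (c j) = small i j) :
    specNorm small ≤ specNorm big := by
  refine specNorm_le _ (specNorm_nonneg big) fun x => ?_
  set xt : P → 𝕜 := Function.extend r x 0 with hxt
  have hdot : ∀ j, (smallᴴ *ᵥ x) j = (bigᴴ *ᵥ xt) (c j) := by
    intro j
    show ∑ i, smallᴴ j i * x i = ∑ I, bigᴴ (c j) I * xt I
    rw [sum_ext_eq hr (fun I => bigᴴ (c j) I * xt I)
      (fun I hI => by
        show bigᴴ (c j) I * Function.extend r x 0 I = 0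
        rw [Function.extend_apply' _ _ _ hI]; simp)]
    refine (Finset.sum_congr rfl fun i _ => ?_).symm
    rw [hxt, hr.extend_apply, Matrix.conjTranspose_apply, Matrix.conjTranspose_apply, hgrid]
  calc sqv (smallᴴ *ᵥ x) = ∑ j, ‖(bigᴴ *ᵥ xt) (c j)‖ ^ 2 := by
        rw [sqv]; exact Finset.sum_congr rfl fun j _ => by rw [hdot]
    _ ≤ sqv (bigᴴ *ᵥ xt) :=
        sum_comp_inj_le hc (fun J => ‖(bigᴴ *ᵥ xt) J‖ ^ 2) (fun J => by positivity)
    _ ≤ specNorm big ^ 2 * sqv xt := sqv_mulVec_le big xt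
    _ = specNorm big ^ 2 * sqv x := by rw [hxt, sqv_extend hr]

lemma specNorm_pad_le (big : Matrix P Q 𝕜) (small : Matrix p q 𝕜)
    (r : p → P) (c : q → Q) (hr : Function.Injective r) (hc : Function.Injective c)
    (hgrid : ∀ i j, big (r i) (c j) = small i j)
    (hz : ∀ I J, big I J ≠ 0 → (∃ i, r i = I) ∧ (∃ j, c j = J)) :
    specNorm big ≤ specNorm small := by
  refine specNorm_le _ (specNorm_nonneg small) fun x => ?_
  have hrow : ∀ I, (¬ ∃ i, r i = I) → ∀ J, big I J = 0 := by
    intro I hI J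
    by_contra hne
    exact hI (hz I J hne).1
  have hJ : ∀ j, (bigᴴ *ᵥ x) (c j) = (smallᴴ *ᵥ (x ∘ r)) j := by
    intro j
    show ∑ I, bigᴴ (c j) I * x I = ∑ i, smallᴴ j i * (x ∘ r) i
    rw [sum_ext_eq hr (fun I => bigᴴ (c j) I * x I) (fun I hI => by
      show bigᴴ (c j) I * x I = 0
      rw [Matrix.conjTranspose_apply, hrow I hI (c j)]; simp)]
    refine Finset.sum_congr rfl fun i _ => ?_
    rw [Matrix.conjTranspose_apply, Matrix.conjTranspose_apply, hgrid]
    rfl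
  have hJ0 : ∀ J, (¬ ∃ j, c j = J) → (bigᴴ *ᵥ x) J = 0 := by
    intro J hJ'
    show ∑ I, bigᴴ J I * x I = 0
    refine Finset.sum_eq_zero fun I _ => ?_
    rw [Matrix.conjTranspose_apply]
    by_cases h : big I J = 0
    · rw [h]; simp
    · exact absurd (hz I J h).2 hJ'
  calc sqv (bigᴴ *ᵥ x) = ∑ j, ‖(bigᴴ *ᵥ x) (c j)‖ ^ 2 := by
        rw [sqv]
        exact sum_ext_eq hc _ (fun J hJ' => by rw [hJ0 J hJ']; simp)
    _ = sqv (smallᴴ *ᵥ (x ∘ r)) := by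
        rw [sqv]; exact Finset.sum_congr rfl fun j _ => by rw [hJ]
    _ ≤ specNorm small ^ 2 * sqv (x ∘ r) := sqv_mulVec_le small _
    _ ≤ specNorm small ^ 2 * sqv x := by
        refine mul_le_mul_of_nonneg_left ?_ (by positivity)
        exact sum_comp_inj_le hr (fun I => ‖x I‖ ^ 2) (fun I => by positivity)

end Stmt17Aux
end Aux4
noncomputable section Aux5
namespace Stmt17Aux
open Matrix Finset
variable {𝕜 : Type*} [RCLike 𝕜]
variable {R1 R2 R3 C1 C2 C3 : Type*} [Fintype R1] [Fintype R2] [Fintype R3]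
  [Fintype C1] [Fintype C2] [Fintype C3] [DecidableEq R1] [DecidableEq R2] [DecidableEq R3]
  [DecidableEq C1] [DecidableEq C2] [DecidableEq C3]

set_option linter.unusedSectionVars false


lemma sq_mul_le {s t : ℝ} (hs0 : 0 ≤ s) (hs1 : s ≤ 1) (ht : 0 ≤ t) : s ^ 2 * t ≤ t := by
  have h2 : s ^ 2 ≤ 1 := by nlinarith
  calc s ^ 2 * t ≤ 1 * t := mul_le_mul_of_nonneg_right h2 ht
    _ = t := one_mul t

lemma sqv_elim {p q : Type*} [Fintype p] [Fintype q] (u : p → 𝕜) (v : q → 𝕜) :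
    sqv (Sum.elim u v) = sqv u + sqv v := by
  rw [sqv, sqv, sqv, Fintype.sum_sum_type]; simp

lemma specNorm_anti_le (Pm : Matrix R1 C3 𝕜) (Qm : Matrix R3 C1 𝕜) (Rm : Matrix R2 C2 𝕜)
    (hP : specNorm Pm ≤ 1) (hQ : specNorm Qm ≤ 1) (hR : specNorm Rm ≤ 1) :
    specNorm (blocks3 0 0 Pm 0 Rm 0 Qm 0 (0 : Matrix R3 C3 𝕜)) ≤ 1 := by
  unfold blocks3
  refine specNorm_le _ zero_le_one fun x => ?_
  have hx : x = Sum.elim (x ∘ Sum.inl)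
      (Sum.elim (x ∘ Sum.inr ∘ Sum.inl) (x ∘ Sum.inr ∘ Sum.inr)) := by
    funext I; rcases I with i | (i | i) <;> rfl
  set x1 := x ∘ Sum.inl with hx1
  set x2 := x ∘ Sum.inr ∘ Sum.inl with hx2
  set x3 := x ∘ Sum.inr ∘ Sum.inr with hx3
  have hmv : (Matrix.fromBlocks 0 (Matrix.fromCols 0 Pm) (Matrix.fromRows 0 Qm)
        (Matrix.fromBlocks Rm 0 0 0))ᴴ *ᵥ x
      = Sum.elim (Qmᴴ *ᵥ x3) (Sum.elim (Rmᴴ *ᵥ x2) (Pmᴴ *ᵥ x1)) := by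
    rw [hx]
    funext J
    rcases J with j | (j | j) <;>
      simp [Matrix.fromBlocks_conjTranspose,
        Matrix.conjTranspose_fromRows_eq_fromCols_conjTranspose,
        Matrix.conjTranspose_fromCols_eq_fromRows_conjTranspose,
        Matrix.fromBlocks_mulVec, Sum.elim_comp_inl, Sum.elim_comp_inr,
        Matrix.fromCols_mulVec_sumElim, Matrix.fromRows_mulVec,
        Matrix.zero_mulVec, Matrix.mulVec_zero]
  rw [hmv, sqv_elim, sqv_elim]
  have b1 := sqv_mulVec_le Qm x3
  have b2 := sqv_mulVec_le Rm x2
  have b3 := sqv_mulVec_le Pm x1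
  have hxx : sqv x = sqv x1 + (sqv x2 + sqv x3) := by
    conv_lhs => rw [hx]
    rw [sqv_elim, sqv_elim]
  rw [hxx, one_pow, one_mul]
  have e1 : sqv (Qmᴴ *ᵥ x3) ≤ sqv x3 :=
    b1.trans (sq_mul_le (specNorm_nonneg Qm) hQ (sqv_nonneg x3))
  have e2 : sqv (Rmᴴ *ᵥ x2) ≤ sqv x2 :=
    b2.trans (sq_mul_le (specNorm_nonneg Rm) hR (sqv_nonneg x2))
  have e3 : sqv (Pmᴴ *ᵥ x1) ≤ sqv x1 :=
    b3.trans (sq_mul_le (specNorm_nonneg Pm) hP (sqv_nonneg x1))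
  linarith

lemma specNorm_blocks3_pad_le (W : Matrix R1 C1 𝕜) (X : Matrix R1 C2 𝕜)
    (Y : Matrix R2 C1 𝕜) (Z : Matrix R2 C2 𝕜) :
    specNorm (blocks3 W X (0 : Matrix R1 C3 𝕜) Y Z (0 : Matrix R2 C3 𝕜)
        (0 : Matrix R3 C1 𝕜) (0 : Matrix R3 C2 𝕜) (0 : Matrix R3 C3 𝕜))
      ≤ specNorm (Matrix.fromBlocks W X Y Z) := by
  refine specNorm_pad_le _ _ (Sum.map id Sum.inl) (Sum.map id Sum.inl)
    (Function.Injective.sumMap (fun _ _ h => h) Sum.inl_injective)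
    (Function.Injective.sumMap (fun _ _ h => h) Sum.inl_injective) ?_ ?_
  · intro i j
    rcases i with i | i <;> rcases j with j | j <;>
      simp [blocks3, Matrix.fromBlocks, Matrix.fromCols, Matrix.fromRows_apply_inl, Matrix.fromRows_apply_inr, Matrix.of_apply, Sum.elim_inl, Sum.elim_inr]
  · refine fun I J hne => ⟨?_, ?_⟩
    · rcases I with i | (i | i)
      · exact ⟨Sum.inl i, rfl⟩
      · exact ⟨Sum.inr i, rfl⟩
      · exfalso; apply hne
        rcases J with j | (j | j) <;>
          simp [blocks3, Matrix.fromBlocks, Matrix.fromCols, Matrix.fromRows_apply_inl, Matrix.fromRows_apply_inr, Matrix.of_apply, Sum.elim_inl, Sum.elim_inr]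
    · rcases J with j | (j | j)
      · exact ⟨Sum.inl j, rfl⟩
      · exact ⟨Sum.inr j, rfl⟩
      · exfalso; apply hne
        rcases I with i | (i | i) <;>
          simp [blocks3, Matrix.fromBlocks, Matrix.fromCols, Matrix.fromRows]

lemma blocks3_split (a : Matrix R1 C1 𝕜) (b : Matrix R1 C2 𝕜) (c : Matrix R1 C3 𝕜)
    (d : Matrix R2 C1 𝕜) (e1 e2 : Matrix R2 C2 𝕜) (g : Matrix R3 C1 𝕜) :
    blocks3 a b c d (e1 + e2) (0 : Matrix R2 C3 𝕜) g (0 : Matrix R3 C2 𝕜)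
        (0 : Matrix R3 C3 𝕜)
      = blocks3 a b 0 d e1 0 0 0 0 + blocks3 0 0 c 0 e2 0 g 0 0 := by
  ext I J
  rcases I with i | (i | i) <;> rcases J with j | (j | j) <;>
    simp [blocks3, Matrix.fromBlocks, Matrix.fromCols, Matrix.fromRows_apply_inl, Matrix.fromRows_apply_inr, Matrix.of_apply, Sum.elim_inl, Sum.elim_inr]

end Stmt17Aux
end Aux5
noncomputable section Aux6
namespace Stmt17Aux
open Matrix Finset
open scoped Kronecker
variable {𝕜 : Type*} [RCLike 𝕜]

lemma spec_Ek_kron_le (k n : ℕ) :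
    specNorm (Ek 𝕜 k ⊗ₖ (1 : Matrix (Fin n) (Fin n) 𝕜)) ≤ 1 := by
  refine le_trans (specNorm_pad_le _ (1 : Matrix (Fin k × Fin n) (Fin k × Fin n) 𝕜)
    id (fun p => (p.1.castSucc, p.2)) (fun a b h => h) ?_ ?_ ?_) specNorm_one_le
  · intro a b h
    rw [Prod.ext_iff] at h ⊢
    exact ⟨Fin.castSucc_injective _ h.1, h.2⟩
  · rintro ⟨i1, i2⟩ ⟨j1, j2⟩
    simp only [Matrix.kroneckerMap_apply, Ek, Matrix.of_apply, Matrix.one_apply,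
      Fin.coe_castSucc, Prod.mk.injEq]
    by_cases h1 : j1 = i1
    · subst h1; simp
    · have : ¬ ((j1 : ℕ) = (i1 : ℕ)) := fun hh => h1 (Fin.ext hh)
      have h2 : i1 ≠ j1 := fun hh => h1 hh.symm
      simp [this, h2]
  · rintro ⟨i1, i2⟩ ⟨j1, j2⟩ h
    refine ⟨⟨(i1, i2), rfl⟩, ?_⟩
    simp only [Matrix.kroneckerMap_apply, Ek, Matrix.of_apply, Matrix.one_apply, ne_eq,
      mul_eq_zero, not_or, ite_eq_right_iff, not_forall] at h
    have hlt : (j1 : ℕ) < k := by rw [h.1.choose]; exact i1.isLt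
    exact ⟨(⟨(j1 : ℕ), hlt⟩, j2), by simp [Prod.ext_iff, Fin.ext_iff]⟩

lemma spec_EkT_kron_le (k m : ℕ) :
    specNorm ((Ek 𝕜 k)ᵀ ⊗ₖ (1 : Matrix (Fin m) (Fin m) 𝕜)) ≤ 1 := by
  refine le_trans (specNorm_pad_le _ (1 : Matrix (Fin k × Fin m) (Fin k × Fin m) 𝕜)
    (fun p => (p.1.castSucc, p.2)) id ?_ (fun a b h => h) ?_ ?_) specNorm_one_le
  · intro a b h
    rw [Prod.ext_iff] at h ⊢
    exact ⟨Fin.castSucc_injective _ h.1, h.2⟩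
  · rintro ⟨i1, i2⟩ ⟨j1, j2⟩
    simp only [Matrix.kroneckerMap_apply, Matrix.transpose_apply, Ek, Matrix.of_apply,
      Matrix.one_apply, Fin.coe_castSucc, Prod.mk.injEq]
    by_cases h1 : i1 = j1
    · subst h1; simp
    · have : ¬ ((i1 : ℕ) = (j1 : ℕ)) := fun hh => h1 (Fin.ext hh)
      simp [this, h1]
  · rintro ⟨i1, i2⟩ ⟨j1, j2⟩ h
    refine ⟨?_, ⟨(j1, j2), rfl⟩⟩
    simp only [Matrix.kroneckerMap_apply, Matrix.transpose_apply, Ek, Matrix.of_apply,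
      Matrix.one_apply, ne_eq, mul_eq_zero, not_or, ite_eq_right_iff, not_forall] at h
    have hlt : (i1 : ℕ) < k := by rw [h.1.choose]; exact j1.isLt
    exact ⟨(⟨(i1 : ℕ), hlt⟩, i2), by simp [Prod.ext_iff, Fin.ext_iff]⟩

lemma spec_Fk_kron_le (k n : ℕ) :
    specNorm (Fk 𝕜 k ⊗ₖ (1 : Matrix (Fin n) (Fin n) 𝕜)) ≤ 1 := by
  refine le_trans (specNorm_pad_le _ (1 : Matrix (Fin k × Fin n) (Fin k × Fin n) 𝕜)
    id (fun p => (p.1.succ, p.2)) (fun a b h => h) ?_ ?_ ?_) specNorm_one_le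
  · intro a b h
    rw [Prod.ext_iff] at h ⊢
    exact ⟨Fin.succ_injective _ h.1, h.2⟩
  · rintro ⟨i1, i2⟩ ⟨j1, j2⟩
    simp only [Matrix.kroneckerMap_apply, Fk, Matrix.of_apply, Matrix.one_apply,
      Fin.val_succ, Prod.mk.injEq]
    by_cases h1 : j1 = i1
    · subst h1; simp
    · have : ¬ ((j1 : ℕ) + 1 = (i1 : ℕ) + 1) := fun hh =>
        h1 (Fin.ext (Nat.succ_injective hh))
      have h2 : i1 ≠ j1 := fun hh => h1 hh.symm
      simp [this, h2, h1, Fin.val_inj]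
  · rintro ⟨i1, i2⟩ ⟨j1, j2⟩ h
    refine ⟨⟨(i1, i2), rfl⟩, ?_⟩
    simp only [Matrix.kroneckerMap_apply, Fk, Matrix.of_apply, Matrix.one_apply, ne_eq,
      mul_eq_zero, not_or, ite_eq_right_iff, not_forall] at h
    have hval : (j1 : ℕ) = (i1 : ℕ) + 1 := h.1.choose
    have hlt : (i1 : ℕ) < k := i1.isLt
    exact ⟨(⟨(i1 : ℕ), hlt⟩, j2), by simp [Prod.ext_iff, Fin.ext_iff, hval]⟩

lemma spec_FkT_kron_le (k m : ℕ) :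
    specNorm ((Fk 𝕜 k)ᵀ ⊗ₖ (1 : Matrix (Fin m) (Fin m) 𝕜)) ≤ 1 := by
  refine le_trans (specNorm_pad_le _ (1 : Matrix (Fin k × Fin m) (Fin k × Fin m) 𝕜)
    (fun p => (p.1.succ, p.2)) id ?_ (fun a b h => h) ?_ ?_) specNorm_one_le
  · intro a b h
    rw [Prod.ext_iff] at h ⊢
    exact ⟨Fin.succ_injective _ h.1, h.2⟩
  · rintro ⟨i1, i2⟩ ⟨j1, j2⟩
    simp only [Matrix.kroneckerMap_apply, Matrix.transpose_apply, Fk, Matrix.of_apply,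
      Matrix.one_apply, Fin.val_succ, Prod.mk.injEq]
    by_cases h1 : i1 = j1
    · subst h1; simp
    · have : ¬ ((i1 : ℕ) + 1 = (j1 : ℕ) + 1) := fun hh =>
        h1 (Fin.ext (Nat.succ_injective hh))
      simp [this, h1, Fin.val_inj]
  · rintro ⟨i1, i2⟩ ⟨j1, j2⟩ h
    refine ⟨?_, ⟨(j1, j2), rfl⟩⟩
    simp only [Matrix.kroneckerMap_apply, Matrix.transpose_apply, Fk, Matrix.of_apply,
      Matrix.one_apply, ne_eq, mul_eq_zero, not_or, ite_eq_right_iff, not_forall] at h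
    have hval : (i1 : ℕ) = (j1 : ℕ) + 1 := h.1.choose
    have hlt : (j1 : ℕ) < k := j1.isLt
    exact ⟨(⟨(j1 : ℕ), hlt⟩, i2), by simp [Prod.ext_iff, Fin.ext_iff, hval]⟩

end Stmt17Aux
end Aux6
noncomputable section Aux7
namespace Stmt17Aux
open Matrix Finset
variable {𝕜 : Type*} [RCLike 𝕜]
variable {P Q : Type*} [Fintype P] [Fintype Q] [DecidableEq P]

set_option linter.unusedSectionVars false

lemma frob_sq (M : Matrix P Q 𝕜) : frobNorm M ^ 2 = ∑ i, ∑ j, ‖M i j‖ ^ 2 :=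
  Real.sq_sqrt (Finset.sum_nonneg fun _ _ => Finset.sum_nonneg fun _ _ => by positivity)

lemma frob_nonneg (M : Matrix P Q 𝕜) : 0 ≤ frobNorm M := Real.sqrt_nonneg _

lemma spec_le_frob (M : Matrix P Q 𝕜) : specNorm M ≤ frobNorm M := by
  refine specNorm_le _ (frob_nonneg M) fun x => ?_
  have hterm : ∀ j, ‖(Mᴴ *ᵥ x) j‖ ^ 2 ≤ (∑ i, ‖M i j‖ ^ 2) * sqv x := by
    intro j
    have h1 : (Mᴴ *ᵥ x) j = (inner 𝕜 (ee (fun i => M i j)) (ee x) : 𝕜) := by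
      rw [inner_ee]
      simp [Matrix.mulVec, dotProduct, Matrix.conjTranspose_apply]
    rw [h1]
    calc ‖(inner 𝕜 (ee (fun i => M i j)) (ee x) : 𝕜)‖ ^ 2
        ≤ (‖ee (fun i => M i j)‖ * ‖ee x‖) ^ 2 := by
          have := norm_inner_le_norm (𝕜 := 𝕜) (ee (fun i => M i j)) (ee x)
          exact pow_le_pow_left₀ (norm_nonneg _) this 2
      _ = ‖ee (fun i => M i j)‖ ^ 2 * ‖ee x‖ ^ 2 := by ring
      _ = (∑ i, ‖M i j‖ ^ 2) * sqv x := by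
          rw [← sqv_eq_norm_sq, ← sqv_eq_norm_sq]; rfl
  calc sqv (Mᴴ *ᵥ x) = ∑ j, ‖(Mᴴ *ᵥ x) j‖ ^ 2 := rfl
    _ ≤ ∑ j, (∑ i, ‖M i j‖ ^ 2) * sqv x := Finset.sum_le_sum fun j _ => hterm j
    _ = (∑ j, ∑ i, ‖M i j‖ ^ 2) * sqv x := by rw [Finset.sum_mul]
    _ = frobNorm M ^ 2 * sqv x := by rw [frob_sq, Finset.sum_comm]

lemma frob_fromBlocks_sq {R1 R2 C1 C2 : Type*} [Fintype R1] [Fintype R2] [Fintype C1]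
    [Fintype C2] [DecidableEq R1] [DecidableEq R2] (W : Matrix R1 C1 𝕜) (X : Matrix R1 C2 𝕜) (Y : Matrix R2 C1 𝕜)
    (Z : Matrix R2 C2 𝕜) :
    frobNorm (Matrix.fromBlocks W X Y Z) ^ 2
      = frobNorm W ^ 2 + frobNorm X ^ 2 + frobNorm Y ^ 2 + frobNorm Z ^ 2 := by
  rw [frob_sq, frob_sq, frob_sq, frob_sq, frob_sq]
  rw [Fintype.sum_sum_type]
  simp only [Fintype.sum_sum_type, Matrix.fromBlocks_apply₁₁, Matrix.fromBlocks_apply₁₂,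
    Matrix.fromBlocks_apply₂₁, Matrix.fromBlocks_apply₂₂, Finset.sum_add_distrib]
  ring

lemma frob_zero {R1 C1 : Type*} [Fintype R1] [Fintype C1] [DecidableEq R1] :
    frobNorm (0 : Matrix R1 C1 𝕜) = 0 := by
  simp [frobNorm]

lemma frob_colUnit_sq {m ℓ η : ℕ} (C : Matrix (Fin m) (Fin ℓ) 𝕜) :
    frobNorm (colUnit η C) ^ 2 = frobNorm C ^ 2 := by
  rw [frob_sq, frob_sq, Fintype.sum_prod_type]
  have key : ∀ i1 : Fin (η+1), (∑ i2, ∑ j, ‖colUnit η C (i1, i2) j‖ ^ 2)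
      = if i1 = Fin.last η then ∑ i2, ∑ j, ‖C i2 j‖ ^ 2 else 0 := by
    intro i1
    by_cases h : i1 = Fin.last η
    · subst h; simp [colUnit, evec]
    · have h2 : ¬((i1 : ℕ) = η) := fun hh => h (Fin.ext (by simp [hh]))
      simp [colUnit, evec, h2, h]
  rw [Finset.sum_congr rfl fun i1 _ => key i1]
  simp

lemma frob_rowUnit_sq {n ℓ ε : ℕ} (B : Matrix (Fin ℓ) (Fin n) 𝕜) :
    frobNorm (rowUnit ε B) ^ 2 = frobNorm B ^ 2 := by
  rw [frob_sq, frob_sq]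
  have key : ∀ i : Fin ℓ, (∑ j : Fin (ε+1) × Fin n, ‖rowUnit ε B i j‖ ^ 2)
      = ∑ j2, ‖B i j2‖ ^ 2 := by
    intro i
    rw [Fintype.sum_prod_type]
    have key2 : ∀ j1 : Fin (ε+1), (∑ j2, ‖rowUnit ε B i (j1, j2)‖ ^ 2)
        = if j1 = Fin.last ε then ∑ j2, ‖B i j2‖ ^ 2 else 0 := by
      intro j1
      by_cases h : j1 = Fin.last ε
      · subst h; simp [rowUnit, evec]
      · have h2 : ¬((j1 : ℕ) = ε) := fun hh => h (Fin.ext (by simp [hh]))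
        simp [rowUnit, evec, h2, h]
    rw [Finset.sum_congr rfl fun j1 _ => key2 j1]
    simp
  exact Finset.sum_congr rfl fun i _ => key i

lemma le_sqrt_add_left {a b : ℝ} (ha : 0 ≤ a) (hb : 0 ≤ b) : a ≤ Real.sqrt (a ^ 2 + b ^ 2) := by
  calc a = Real.sqrt (a ^ 2) := (Real.sqrt_sq ha).symm
    _ ≤ Real.sqrt (a ^ 2 + b ^ 2) := Real.sqrt_le_sqrt (by nlinarith)

lemma le_sqrt_add_right {a b : ℝ} (ha : 0 ≤ a) (hb : 0 ≤ b) : b ≤ Real.sqrt (a ^ 2 + b ^ 2) := by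
  calc b = Real.sqrt (b ^ 2) := (Real.sqrt_sq hb).symm
    _ ≤ Real.sqrt (a ^ 2 + b ^ 2) := Real.sqrt_le_sqrt (by nlinarith)

lemma sqrt_sq_add_sq_mono {a b a' b' : ℝ} (ha : 0 ≤ a) (hb : 0 ≤ b) (ha' : a ≤ a')
    (hb' : b ≤ b') : Real.sqrt (a ^ 2 + b ^ 2) ≤ Real.sqrt (a' ^ 2 + b' ^ 2) :=
  Real.sqrt_le_sqrt (by nlinarith)

lemma minkowski2 {a b c d : ℝ} (ha : 0 ≤ a) (hb : 0 ≤ b) (hc : 0 ≤ c) (hd : 0 ≤ d) :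
    Real.sqrt ((a + c) ^ 2 + (b + d) ^ 2)
      ≤ Real.sqrt (a ^ 2 + b ^ 2) + Real.sqrt (c ^ 2 + d ^ 2) := by
  set s := Real.sqrt (a ^ 2 + b ^ 2) with hs
  set t := Real.sqrt (c ^ 2 + d ^ 2) with ht
  have hs2 : s ^ 2 = a ^ 2 + b ^ 2 := Real.sq_sqrt (by positivity)
  have ht2 : t ^ 2 = c ^ 2 + d ^ 2 := Real.sq_sqrt (by positivity)
  have hsn : 0 ≤ s := Real.sqrt_nonneg _
  have htn : 0 ≤ t := Real.sqrt_nonneg _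
  have hcross : a * c + b * d ≤ s * t := by
    have h1 : a * c + b * d = Real.sqrt ((a * c + b * d) ^ 2) :=
      (Real.sqrt_sq (by positivity)).symm
    have h2 : (a * c + b * d) ^ 2 ≤ (a ^ 2 + b ^ 2) * (c ^ 2 + d ^ 2) := by
      nlinarith [sq_nonneg (a * d - b * c)]
    calc a * c + b * d = Real.sqrt ((a * c + b * d) ^ 2) := h1
      _ ≤ Real.sqrt ((a ^ 2 + b ^ 2) * (c ^ 2 + d ^ 2)) := Real.sqrt_le_sqrt h2
      _ = s * t := by rw [Real.sqrt_mul (by positivity), hs, ht]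
  calc Real.sqrt ((a + c) ^ 2 + (b + d) ^ 2) ≤ Real.sqrt ((s + t) ^ 2) := by
        apply Real.sqrt_le_sqrt; nlinarith
    _ = s + t := Real.sqrt_sq (by positivity)

end Stmt17Aux
end Aux7
open Stmt17Aux in
/-- Lemma 4.16. Bounds on the spectral norm of a block Kronecker pencil. -/
theorem statement17 {𝕜 : Type*} [RCLike 𝕜] (m n ℓ ε η : ℕ)
    (hm : 0 < m) (hn : 0 < n) (hℓ : 0 < ℓ) (hmax : 0 < max ε η)
    (A : Matrix (Fin ℓ) (Fin ℓ) 𝕜) (B : Matrix (Fin ℓ) (Fin n) 𝕜) (C : Matrix (Fin m) (Fin ℓ) 𝕜)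
    (Ma Mb : Matrix (Fin (η+1) × Fin m) (Fin (ε+1) × Fin n) 𝕜)
    (S : Matrix (SRow m ℓ ε η n) (SCol m ℓ ε η n) 𝕜 ×
         Matrix (SRow m ℓ ε η n) (SCol m ℓ ε η n) 𝕜)
    (hS : S = blockKron m n ℓ ε η A B C (Ma, Mb)) :
    max (max 1 (specNorm A)) (max (specNorm B) (max (specNorm C) (pSpec (Ma, Mb)))) ≤
      pSpec S ∧
    pSpec S ≤ Real.sqrt 2 +
      pSpec (Matrix.fromBlocks Ma (colUnit η C) (rowUnit ε B) A,
             (Matrix.fromBlocks Mb 0 0 0 :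
               Matrix ((Fin (η+1) × Fin m) ⊕ Fin ℓ) ((Fin (ε+1) × Fin n) ⊕ Fin ℓ) 𝕜)) ∧
    pSpec (Matrix.fromBlocks Ma (colUnit η C) (rowUnit ε B) A,
           (Matrix.fromBlocks Mb 0 0 0 :
             Matrix ((Fin (η+1) × Fin m) ⊕ Fin ℓ) ((Fin (ε+1) × Fin n) ⊕ Fin ℓ) 𝕜)) ≤
      Real.sqrt (frobNorm A ^ 2 + frobNorm B ^ 2 + frobNorm C ^ 2 + pFrob (Ma, Mb) ^ 2) := by
  subst hS
  set Sa : Matrix (SRow m ℓ ε η n) (SCol m ℓ ε η n) 𝕜 :=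
    blocks3 Ma (colUnit η C) ((Ek 𝕜 η)ᵀ ⊗ₖ (1 : Matrix (Fin m) (Fin m) 𝕜))
      (rowUnit ε B) A 0
      (Ek 𝕜 ε ⊗ₖ (1 : Matrix (Fin n) (Fin n) 𝕜)) 0 0 with hSa
  set Sb : Matrix (SRow m ℓ ε η n) (SCol m ℓ ε η n) 𝕜 :=
    blocks3 Mb 0 ((Fk 𝕜 η)ᵀ ⊗ₖ (1 : Matrix (Fin m) (Fin m) 𝕜))
      0 1 0
      (Fk 𝕜 ε ⊗ₖ (1 : Matrix (Fin n) (Fin n) 𝕜)) 0 0 with hSb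
  have hpS : pSpec (blockKron m n ℓ ε η A B C (Ma, Mb))
      = Real.sqrt (specNorm Sa ^ 2 + specNorm Sb ^ 2) := rfl
  set Na : Matrix ((Fin (η+1) × Fin m) ⊕ Fin ℓ) ((Fin (ε+1) × Fin n) ⊕ Fin ℓ) 𝕜 :=
    Matrix.fromBlocks Ma (colUnit η C) (rowUnit ε B) A with hNa
  set Nb : Matrix ((Fin (η+1) × Fin m) ⊕ Fin ℓ) ((Fin (ε+1) × Fin n) ⊕ Fin ℓ) 𝕜 :=
    Matrix.fromBlocks Mb 0 0 0 with hNb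
  have hpN : pSpec (Na, Nb) = Real.sqrt (specNorm Na ^ 2 + specNorm Nb ^ 2) := rfl
  -- lower bounds
  have hA : specNorm A ≤ specNorm Sa := by
    refine specNorm_submatrix_le Sa A (fun i => Sum.inr (Sum.inl i))
      (fun j => Sum.inr (Sum.inl j))
      (fun a b h => Sum.inl_injective (Sum.inr_injective h))
      (fun a b h => Sum.inl_injective (Sum.inr_injective h)) ?_
    intro i j
    simp [hSa, blocks3, Matrix.fromBlocks, Matrix.fromCols, Matrix.fromRows]
  have hB : specNorm B ≤ specNorm Sa := by
    refine specNorm_submatrix_le Sa B (fun i => Sum.inr (Sum.inl i))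
      (fun j => Sum.inl (Fin.last ε, j))
      (fun a b h => Sum.inl_injective (Sum.inr_injective h))
      (fun a b h => (Prod.ext_iff.1 (Sum.inl_injective h)).2) ?_
    intro i j
    simp [hSa, blocks3, Matrix.fromBlocks, Matrix.fromCols, Matrix.fromRows_apply_inl, Matrix.fromRows_apply_inr, Matrix.of_apply, Sum.elim_inl, Sum.elim_inr,
      rowUnit, evec]
  have hC : specNorm C ≤ specNorm Sa := by
    refine specNorm_submatrix_le Sa C (fun i => Sum.inl (Fin.last η, i))
      (fun j => Sum.inr (Sum.inl j))
      (fun a b h => (Prod.ext_iff.1 (Sum.inl_injective h)).2)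
      (fun a b h => Sum.inl_injective (Sum.inr_injective h)) ?_
    intro i j
    simp [hSa, blocks3, Matrix.fromBlocks, Matrix.fromCols, Matrix.fromRows,
      colUnit, evec]
  have hMa : specNorm Ma ≤ specNorm Sa := by
    refine specNorm_submatrix_le Sa Ma Sum.inl Sum.inl
      Sum.inl_injective Sum.inl_injective ?_
    intro i j
    simp [hSa, blocks3, Matrix.fromBlocks, Matrix.fromCols, Matrix.fromRows]
  have hMb : specNorm Mb ≤ specNorm Sb := by
    refine specNorm_submatrix_le Sb Mb Sum.inl Sum.inl
      Sum.inl_injective Sum.inl_injective ?_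
    intro i j
    simp [hSb, blocks3, Matrix.fromBlocks, Matrix.fromCols, Matrix.fromRows]
  have hone : (1 : ℝ) ≤ specNorm Sb := by
    set i0 : Fin ℓ := ⟨0, hℓ⟩ with hi0
    set I0 : SRow m ℓ ε η n := Sum.inr (Sum.inl i0) with hI0
    set x : SRow m ℓ ε η n → 𝕜 := fun I => if I = I0 then 1 else 0 with hx
    have hxs : sqv x = 1 := by
      simp [hx, sqv, apply_ite (fun z : 𝕜 => ‖z‖ ^ 2), Finset.sum_ite_eq']
    refine le_specNorm Sb zero_le_one x hxs ?_
    have hentry : (Sbᴴ *ᵥ x) (Sum.inr (Sum.inl i0) : SCol m ℓ ε η n) = 1 := by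
      show (∑ I, Sbᴴ (Sum.inr (Sum.inl i0)) I * x I) = 1
      rw [hx]
      simp only [mul_ite, mul_one, mul_zero, Finset.sum_ite_eq']
      simp [hI0, hSb, blocks3, Matrix.fromBlocks, Matrix.fromCols, Matrix.fromRows,
        Matrix.conjTranspose_apply, Matrix.one_apply]
    calc (1 : ℝ) ^ 2 = ‖(Sbᴴ *ᵥ x) (Sum.inr (Sum.inl i0) : SCol m ℓ ε η n)‖ ^ 2 := by
          rw [hentry]; simp
      _ ≤ sqv (Sbᴴ *ᵥ x) :=
          Finset.single_le_sum (f := fun J => ‖(Sbᴴ *ᵥ x) J‖ ^ 2)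
            (fun J _ => by positivity) (Finset.mem_univ _)
  -- splitting
  have hsplitA : Sa = blocks3 Ma (colUnit η C) 0 (rowUnit ε B) A 0 0 0 0
      + blocks3 0 0 ((Ek 𝕜 η)ᵀ ⊗ₖ (1 : Matrix (Fin m) (Fin m) 𝕜)) 0 0 0
          (Ek 𝕜 ε ⊗ₖ (1 : Matrix (Fin n) (Fin n) 𝕜)) 0 0 := by
    rw [hSa, show A = A + 0 from (add_zero A).symm, blocks3_split, add_zero]
  have hsplitB : Sb = blocks3 Mb 0 0 0 0 0 0 0 0
      + blocks3 0 0 ((Fk 𝕜 η)ᵀ ⊗ₖ (1 : Matrix (Fin m) (Fin m) 𝕜)) 0 1 0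
          (Fk 𝕜 ε ⊗ₖ (1 : Matrix (Fin n) (Fin n) 𝕜)) 0 0 := by
    rw [hSb, show (1 : Matrix (Fin ℓ) (Fin ℓ) 𝕜) = 0 + 1 from (zero_add 1).symm, blocks3_split,
      zero_add]
  have hKa : specNorm (blocks3 0 0 ((Ek 𝕜 η)ᵀ ⊗ₖ (1 : Matrix (Fin m) (Fin m) 𝕜)) 0
      (0 : Matrix (Fin ℓ) (Fin ℓ) 𝕜) 0
      (Ek 𝕜 ε ⊗ₖ (1 : Matrix (Fin n) (Fin n) 𝕜)) 0 0) ≤ 1 :=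
    specNorm_anti_le _ _ _ (spec_EkT_kron_le η m) (spec_Ek_kron_le ε n) specNorm_zero_le
  have hKb : specNorm (blocks3 0 0 ((Fk 𝕜 η)ᵀ ⊗ₖ (1 : Matrix (Fin m) (Fin m) 𝕜)) 0
      (1 : Matrix (Fin ℓ) (Fin ℓ) 𝕜) 0
      (Fk 𝕜 ε ⊗ₖ (1 : Matrix (Fin n) (Fin n) 𝕜)) 0 0) ≤ 1 :=
    specNorm_anti_le _ _ _ (spec_FkT_kron_le η m) (spec_Fk_kron_le ε n) specNorm_one_le
  have hPa : specNorm (blocks3 Ma (colUnit η C) 0 (rowUnit ε B) A 0 0 0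
      (0 : Matrix (Fin ε × Fin n) (Fin η × Fin m) 𝕜)) ≤ specNorm Na :=
    specNorm_blocks3_pad_le Ma (colUnit η C) (rowUnit ε B) A
  have hPb : specNorm (blocks3 Mb 0 0 0 0 0 0 0
      (0 : Matrix (Fin ε × Fin n) (Fin η × Fin m) 𝕜)) ≤ specNorm Nb :=
    specNorm_blocks3_pad_le Mb 0 0 0
  have hsa : specNorm Sa ≤ specNorm Na + 1 := by
    rw [hsplitA]
    exact (specNorm_add_le _ _).trans (add_le_add hPa hKa)
  have hsb : specNorm Sb ≤ specNorm Nb + 1 := by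
    rw [hsplitB]
    exact (specNorm_add_le _ _).trans (add_le_add hPb hKb)
  -- Frobenius bound
  have hfrob : pSpec (Na, Nb)
      ≤ Real.sqrt (frobNorm A ^ 2 + frobNorm B ^ 2 + frobNorm C ^ 2 + pFrob (Ma, Mb) ^ 2) := by
    rw [hpN]
    have h1 : specNorm Na ≤ frobNorm Na := spec_le_frob Na
    have h2 : specNorm Nb ≤ frobNorm Nb := spec_le_frob Nb
    have e1 : frobNorm Na ^ 2 = frobNorm Ma ^ 2 + frobNorm C ^ 2 + frobNorm B ^ 2
        + frobNorm A ^ 2 := by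
      rw [hNa, frob_fromBlocks_sq, frob_colUnit_sq, frob_rowUnit_sq]
    have e2 : frobNorm Nb ^ 2 = frobNorm Mb ^ 2 := by
      rw [hNb, frob_fromBlocks_sq]
      simp [frob_zero]
    have e3 : pFrob (Ma, Mb) ^ 2 = frobNorm Ma ^ 2 + frobNorm Mb ^ 2 :=
      Real.sq_sqrt (by positivity)
    calc Real.sqrt (specNorm Na ^ 2 + specNorm Nb ^ 2)
        ≤ Real.sqrt (frobNorm Na ^ 2 + frobNorm Nb ^ 2) :=
          sqrt_sq_add_sq_mono (specNorm_nonneg Na) (specNorm_nonneg Nb) h1 h2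
      _ = Real.sqrt (frobNorm A ^ 2 + frobNorm B ^ 2 + frobNorm C ^ 2 + pFrob (Ma, Mb) ^ 2) := by
          rw [e1, e2, e3]; ring_nf
  refine ⟨?_, ?_, hfrob⟩
  · -- lower bounds combined
    rw [hpS]
    have hha : specNorm Sa ≤ Real.sqrt (specNorm Sa ^ 2 + specNorm Sb ^ 2) :=
      le_sqrt_add_left (specNorm_nonneg Sa) (specNorm_nonneg Sb)
    have hhb : specNorm Sb ≤ Real.sqrt (specNorm Sa ^ 2 + specNorm Sb ^ 2) :=
      le_sqrt_add_right (specNorm_nonneg Sa) (specNorm_nonneg Sb)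
    refine max_le (max_le (hone.trans hhb) (hA.trans hha))
      (max_le (hB.trans hha) (max_le (hC.trans hha) ?_))
    have : pSpec (Ma, Mb) = Real.sqrt (specNorm Ma ^ 2 + specNorm Mb ^ 2) := rfl
    rw [this]
    exact (sqrt_sq_add_sq_mono (specNorm_nonneg Ma) (specNorm_nonneg Mb) hMa hMb)
  · -- upper bound
    rw [hpS, hpN]
    calc Real.sqrt (specNorm Sa ^ 2 + specNorm Sb ^ 2)
        ≤ Real.sqrt ((1 + specNorm Na) ^ 2 + (1 + specNorm Nb) ^ 2) := by
          refine sqrt_sq_add_sq_mono (specNorm_nonneg Sa) (specNorm_nonneg Sb) ?_ ?_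
          · linarith [hsa]
          · linarith [hsb]
      _ ≤ Real.sqrt ((1 : ℝ) ^ 2 + 1 ^ 2) + Real.sqrt (specNorm Na ^ 2 + specNorm Nb ^ 2) :=
          minkowski2 zero_le_one zero_le_one (specNorm_nonneg Na) (specNorm_nonneg Nb)
      _ = Real.sqrt 2 + Real.sqrt (specNorm Na ^ 2 + specNorm Nb ^ 2) := by norm_num
end
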